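/- arXiv:1304.6853 — 3 statements merged into one kernel-verified Lean document; each statement's English description precedes it below -/
import Mathlib

section
/- Let n ≥ 1, let u ∈ ℝ \ {0}, and let K_{iu}(x) = π^{−n/2} 2^{−iu} Γ((n − iu)/2)/Γ(iu/2) · |x|^{−n+iu} be the convolution kernel of I_{iu}. Then there is a constant C, depending only on n, such that |K_{iu}(x)| ≤ C (1 + |u|)^{n/2} |x|^{−n} for all x ∈ ℝ^n \ {0} and all u ∈ ℝ \ {0}. -/
open MeasureTheory Metric Filter Topology
open scoped ENNReal FourierTransform SchwartzMap

noncomputable section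

/-- Euclidean space `ℝⁿ`. -/
abbrev Rn (n : ℕ) := EuclideanSpace ℝ (Fin n)

/-- The modular `ρ_{p(·)}(f)` of the variable Lebesgue space `L^{p(·)}(ℝⁿ)`:
`∫_{ℝⁿ \ ℝⁿ_∞} |f|^{p(x)} dx + ‖f‖_{L^∞(ℝⁿ_∞)}`, where `ℝⁿ_∞ = {p = ∞}`. -/
def varModular {n : ℕ} {E : Type*} [NormedAddCommGroup E]
    (p : Rn n → ℝ≥0∞) (f : Rn n → E) : ℝ≥0∞ :=
  (∫⁻ x in {x | p x ≠ ∞}, ENNReal.ofReal ‖f x‖ ^ (p x).toReal) +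
    essSup (fun x => ENNReal.ofReal ‖f x‖) (volume.restrict {x | p x = ∞})

/-- The Luxemburg norm `‖f‖_{p(·)} = inf {λ > 0 : ρ_{p(·)}(f/λ) ≤ 1}`. -/
def varNorm {n : ℕ} {E : Type*} [NormedAddCommGroup E]
    (p : Rn n → ℝ≥0∞) (f : Rn n → E) : ℝ :=
  sInf {c : ℝ | 0 < c ∧ varModular p (fun x => ‖f x‖ / c) ≤ 1}

/-- Membership in the variable Lebesgue space `L^{p(·)}(ℝⁿ)`. -/
def MemVarLp {n : ℕ} {E : Type*} [NormedAddCommGroup E]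
    (p : Rn n → ℝ≥0∞) (f : Rn n → E) : Prop :=
  AEStronglyMeasurable f volume ∧ ∃ c : ℝ, 0 < c ∧ varModular p (fun x => ‖f x‖ / c) < ∞

/-- The Hardy–Littlewood maximal function `Mf(x) = sup_{r>0} |B(x,r)|⁻¹ ∫_{B(x,r)} |f|`. -/
def hlMax {n : ℕ} {E : Type*} [NormedAddCommGroup E] (f : Rn n → E) (x : Rn n) : ℝ :=
  ⨆ r : {r : ℝ // 0 < r},
    ((volume (ball x r.1)).toReal)⁻¹ * ∫ y in ball x r.1, ‖f y‖

/-- The class `B(ℝⁿ)` of variable exponents `p : ℝⁿ → [1,∞]` for which the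
Hardy–Littlewood maximal operator is bounded on `L^{p(·)}(ℝⁿ)`. -/
def MemClassB {n : ℕ} (p : Rn n → ℝ≥0∞) : Prop :=
  Measurable p ∧ (∀ x, 1 ≤ p x) ∧
    ∃ C : ℝ, 0 < C ∧ ∀ f : Rn n → ℝ, MemVarLp p f →
      varNorm p (hlMax f) ≤ C * varNorm p f

/-- The class `P^log(ℝⁿ)`: variable exponents `p : ℝⁿ → [1,∞]` such that `1/p` is
globally log-Hölder continuous (locally log-Hölder plus log-Hölder decay). -/
def MemPLog {n : ℕ} (p : Rn n → ℝ≥0∞) : Prop :=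
  Measurable p ∧ (∀ x, 1 ≤ p x) ∧
    (∃ c₁ : ℝ, 0 < c₁ ∧ ∀ x y : Rn n, dist x y < 1/2 →
      |((p x)⁻¹).toReal - ((p y)⁻¹).toReal| ≤ c₁ / Real.log (Real.exp 1 + (dist x y)⁻¹)) ∧
    (∃ pinf c₂ : ℝ, 0 < c₂ ∧ ∀ x : Rn n,
      |((p x)⁻¹).toReal - pinf| ≤ c₂ / Real.log (Real.exp 1 + ‖x‖))

/-- The Fourier multiplier `(2π|ξ|)^{-iu}` of the imaginary power `I_{iu} = (-Δ)^{-iu/2}`. -/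
def impMult {n : ℕ} (u : ℝ) (ξ : Rn n) : ℂ :=
  ((2 * Real.pi * ‖ξ‖ : ℝ) : ℂ) ^ (-(Complex.I * u))

/-- A weight `w` on `ℝⁿ` belongs to the Muckenhoupt class `A_p` with constant (at most) `A`:
it is nonnegative, locally integrable, and
`(|B|⁻¹∫_B w)·(|B|⁻¹∫_B w^{1-p'})^{p-1} ≤ A` for every ball `B`, where `p' = p/(p-1)`
(so that `1 - p' = -1/(p-1)`). -/
def IsAp {n : ℕ} (p : ℝ) (w : Rn n → ℝ) (A : ℝ) : Prop :=
  (∀ x, 0 ≤ w x) ∧ LocallyIntegrable w volume ∧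
    ∀ (x : Rn n) (r : ℝ), 0 < r →
      (((volume (ball x r)).toReal)⁻¹ * ∫ y in ball x r, w y) *
        (((volume (ball x r)).toReal)⁻¹ * ∫ y in ball x r, (w y) ^ (-(p - 1)⁻¹)) ^ (p - 1) ≤ A

/-- The weighted Lebesgue norm `‖f‖_{p,w} = (∫ |f|^p w dx)^{1/p}`. -/
def wNorm {n : ℕ} (p : ℝ) (w : Rn n → ℝ) (f : Rn n → ℂ) : ℝ :=
  (∫ x : Rn n, ‖f x‖ ^ p * w x) ^ (1 / p)

/-- The Bessel function of the first kind of order `ν`. -/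
def besselJ (ν x : ℝ) : ℝ :=
  ∑' m : ℕ, ((-1 : ℝ) ^ m / (m.factorial * Real.Gamma (m + ν + 1))) * (x / 2) ^ (2 * m + ν)

/-- `F_α(λ) = π^{-α+1} λ^{-n/2-α+1} J_{n/2+α-1}(2πλ)`, the Fourier multiplier profile of the
spherical mean operator `M_t^α` (meaningful for `λ > 0`). -/
def sphF (n : ℕ) (α l : ℝ) : ℝ :=
  Real.pi ^ (-α + 1) * l ^ (-(n : ℝ)/2 - α + 1) * besselJ ((n : ℝ)/2 + α - 1) (2 * Real.pi * l)

/-- The spherical maximal function `M^α f(x) = sup_{t>0} |M_t^α f(x)|` associated with a family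
`S` of spherical mean operators (`S t f = M_t^α f`). -/
def sphMax {n : ℕ} (S : ℝ → 𝓢(Rn n, ℂ) → (Rn n → ℂ)) (f : 𝓢(Rn n, ℂ)) (x : Rn n) : ℝ :=
  ⨆ t : {t : ℝ // 0 < t}, ‖S t.1 f x‖

/-- The convolution kernel `K_{iu}(x) = π^{-n/2} 2^{-iu} Γ((n-iu)/2)/Γ(iu/2) · |x|^{-n+iu}`
of the imaginary power `I_{iu} = (-Δ)^{-iu/2}`. -/
def impKernel (n : ℕ) (u : ℝ) (x : Rn n) : ℂ :=
  (Real.pi : ℂ) ^ (-(n : ℂ)/2) * (2 : ℂ) ^ (-(Complex.I * u)) *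
    (Complex.Gamma (((n : ℂ) - Complex.I * u)/2) / Complex.Gamma (Complex.I * u/2)) *
    ((‖x‖ : ℂ) ^ (-(n : ℂ) + Complex.I * u))

namespace ImpAux

lemma half_ne (n : ℕ) (u : ℝ) (hu : u ≠ 0) : ((n:ℂ) - Complex.I * u)/2 ≠ 0 := by
  intro h
  apply hu
  have := congrArg Complex.im h
  simpa using this

lemma gammaI_ne (u : ℝ) (hu : u ≠ 0) : Complex.Gamma (Complex.I * u / 2) ≠ 0 := by
  apply Complex.Gamma_ne_zero
  intro m h
  apply hu
  have := congrArg Complex.im h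
  simpa using this

lemma normGammaI (u : ℝ) (hu : 0 < u) :
    ‖Complex.Gamma (Complex.I * u / 2)‖ ^ 2 * (u / 2) = Real.pi / Real.sinh (Real.pi * u / 2) := by
  set z : ℂ := Complex.I * u / 2 with hzdef
  have hzne : z ≠ 0 := by
    intro h; have := congrArg Complex.im h; simp [hzdef] at this; exact hu.ne' this
  have hcz : (starRingEnd ℂ) z = -z := by simp [hzdef, map_div₀, map_ofNat]; ring
  have key := Complex.Gamma_mul_Gamma_one_sub z
  have h1 : (1:ℂ) - z = -z + 1 := by ring
  rw [h1, Complex.Gamma_add_one _ (neg_ne_zero.2 hzne), ← hcz, Complex.Gamma_conj] at key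
  have key2 : ((Complex.normSq (Complex.Gamma z) : ℂ)) * (starRingEnd ℂ) z
      = Real.pi / Complex.sin (Real.pi * z) := by
    rw [← Complex.mul_conj]; rw [← key]; ring
  have hn := congrArg (fun w => ‖w‖) key2
  simp only [norm_mul, norm_div] at hn
  rw [Complex.norm_real, Real.norm_eq_abs, abs_of_nonneg (Complex.normSq_nonneg _)] at hn
  have hsin : ‖Complex.sin (Real.pi * z)‖ = Real.sinh (Real.pi * u / 2) := by
    have h : (Real.pi : ℂ) * z = ((Real.pi * u / 2 : ℝ) : ℂ) * Complex.I := by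
      rw [hzdef]; push_cast; ring
    rw [h, Complex.sin_mul_I, ← Complex.ofReal_sinh, norm_mul, Complex.norm_I, mul_one,
      Complex.norm_real, Real.norm_eq_abs,
      abs_of_nonneg (Real.sinh_pos_iff.2 (by positivity)).le]
  have hznorm : ‖(starRingEnd ℂ) z‖ = u / 2 := by
    rw [RCLike.norm_conj, hzdef]
    simp [norm_div, abs_of_pos hu]
  rw [hsin, hznorm, Complex.normSq_eq_norm_sq] at hn
  simpa [Complex.norm_real, abs_of_nonneg Real.pi_pos.le] using hn

lemma normGamma1 (u : ℝ) :
    ‖Complex.Gamma (((1:ℂ) - Complex.I * u)/2)‖ ^ 2 = Real.pi / Real.cosh (Real.pi * u / 2) := by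
  set w : ℂ := ((1:ℂ) - Complex.I * u)/2 with hwdef
  have hcw : (starRingEnd ℂ) w = 1 - w := by
    simp [hwdef, map_div₀, map_sub, map_ofNat]; ring
  have key := Complex.Gamma_mul_Gamma_one_sub w
  rw [← hcw, Complex.Gamma_conj, Complex.mul_conj] at key
  have hsin : Complex.sin (Real.pi * w) = ((Real.cosh (Real.pi * u / 2) : ℝ) : ℂ) := by
    have h : (Real.pi : ℂ) * w = (Real.pi : ℂ) / 2 - ((Real.pi * u / 2 : ℝ) : ℂ) * Complex.I := by
      rw [hwdef]; push_cast; ring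
    rw [h, Complex.sin_pi_div_two_sub, Complex.cos_mul_I, Complex.ofReal_cosh]
  rw [hsin, ← Complex.ofReal_div] at key
  have := Complex.ofReal_inj.1 key
  rw [Complex.normSq_eq_norm_sq] at this
  exact this

/-- The Gamma ratio. -/
noncomputable def Gr (n : ℕ) (u : ℝ) : ℂ :=
  Complex.Gamma (((n:ℂ) - Complex.I * u)/2) / Complex.Gamma (Complex.I * u/2)

lemma Gr_neg_norm (n : ℕ) (u : ℝ) : ‖Gr n (-u)‖ = ‖Gr n u‖ := by
  unfold Gr
  have h1 : ((n:ℂ) - Complex.I * ((-u : ℝ) : ℂ))/2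
      = (starRingEnd ℂ) (((n:ℂ) - Complex.I * u)/2) := by
    simp [map_div₀, map_sub, map_ofNat]
  have h2 : Complex.I * ((-u : ℝ) : ℂ)/2 = (starRingEnd ℂ) (Complex.I * u/2) := by
    simp [map_div₀, map_ofNat]
  rw [h1, h2, Complex.Gamma_conj, Complex.Gamma_conj, ← map_div₀, RCLike.norm_conj]

def PG (n : ℕ) : Prop :=
  ∃ C : ℝ, 0 < C ∧ ∀ u : ℝ, u ≠ 0 → ‖Gr n u‖ ≤ C * (1 + |u|) ^ ((n:ℝ)/2)

lemma PG1 : PG 1 := by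
  refine ⟨1, one_pos, ?_⟩
  have key : ∀ u : ℝ, 0 < u → ‖Gr 1 u‖ ≤ (1 + u) ^ ((1:ℝ)/2) := by
    intro u hu
    have hA := normGammaI u hu
    have hB := normGamma1 u
    set t := Real.pi * u / 2 with htdef
    have hsinh : 0 < Real.sinh t := Real.sinh_pos_iff.2 (by positivity)
    have hcosh : 0 < Real.cosh t := Real.cosh_pos t
    have hbne : ‖Complex.Gamma (Complex.I * u/2)‖ ≠ 0 :=
      norm_ne_zero_iff.2 (gammaI_ne u hu.ne')
    have hg2 : ‖Gr 1 u‖^2 * ‖Complex.Gamma (Complex.I * u/2)‖^2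
        = ‖Complex.Gamma (((1:ℂ) - Complex.I * u)/2)‖^2 := by
      unfold Gr
      rw [norm_div, div_pow, div_mul_cancel₀]
      · push_cast; ring_nf
      · positivity
    have key2 : ‖Gr 1 u‖^2 * (Real.pi / Real.sinh t) = (Real.pi / Real.cosh t) * (u/2) := by
      calc ‖Gr 1 u‖^2 * (Real.pi / Real.sinh t)
          = ‖Gr 1 u‖^2 * (‖Complex.Gamma (Complex.I * u/2)‖^2 * (u/2)) := by rw [hA]
        _ = (‖Gr 1 u‖^2 * ‖Complex.Gamma (Complex.I * u/2)‖^2) * (u/2) := by ring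
        _ = ‖Complex.Gamma (((1:ℂ) - Complex.I * u)/2)‖^2 * (u/2) := by rw [hg2]
        _ = (Real.pi / Real.cosh t) * (u/2) := by rw [hB]
    have hmul : ‖Gr 1 u‖^2 * Real.pi * Real.cosh t = Real.pi * (u/2) * Real.sinh t := by
      field_simp at key2
      linear_combination (Real.pi / 2) * key2
    have hsq : ‖Gr 1 u‖^2 ≤ 1 + u := by
      nlinarith [hmul, mul_pos Real.pi_pos hcosh, hu,
        mul_le_mul_of_nonneg_left (Real.sinh_lt_cosh t).le
          (by positivity : (0:ℝ) ≤ Real.pi * (u/2))]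
    have h1u : (0:ℝ) ≤ 1 + u := by linarith
    calc ‖Gr 1 u‖ = Real.sqrt (‖Gr 1 u‖^2) := (Real.sqrt_sq (norm_nonneg _)).symm
      _ ≤ Real.sqrt (1 + u) := Real.sqrt_le_sqrt hsq
      _ = (1 + u) ^ ((1:ℝ)/2) := Real.sqrt_eq_rpow _
  intro u hu
  rcases hu.lt_or_gt with h | h
  · have := key (-u) (by linarith)
    rw [Gr_neg_norm] at this
    rw [abs_of_neg h]
    simpa using this
  · rw [abs_of_pos h]
    simpa using key u h

lemma PG2 : PG 2 := by
  refine ⟨1, one_pos, ?_⟩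
  intro u hu
  have hzne : -(Complex.I * (u:ℂ)/2) ≠ 0 := by
    intro h; apply hu
    have := congrArg Complex.im h
    simpa using this
  have h1 : (((2:ℕ):ℂ) - Complex.I * u)/2 = -(Complex.I * (u:ℂ)/2) + 1 := by
    push_cast; ring
  have h2 : -(Complex.I * (u:ℂ)/2) = (starRingEnd ℂ) (Complex.I * u/2) := by
    simp [map_div₀, map_ofNat]; ring
  have hG : Gr 2 u = -(Complex.I * (u:ℂ)/2) * ((starRingEnd ℂ) (Complex.Gamma (Complex.I * u/2))
      / Complex.Gamma (Complex.I * u/2)) := by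
    unfold Gr
    rw [h1, Complex.Gamma_add_one _ hzne, h2, Complex.Gamma_conj, mul_div_assoc]
  rw [hG, norm_mul, norm_div, RCLike.norm_conj,
    div_self (norm_ne_zero_iff.2 (gammaI_ne u hu)), mul_one]
  have hn : ‖-(Complex.I * (u:ℂ)/2)‖ = |u|/2 := by
    simp [norm_div]
  rw [hn]
  have : ((2:ℕ):ℝ)/2 = (1:ℝ) := by norm_num
  rw [this, Real.rpow_one]
  have := abs_nonneg u
  linarith

lemma PG_step (n : ℕ) (hn : 1 ≤ n) : PG n → PG (n+2) := by
  rintro ⟨C, hC, hG⟩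
  refine ⟨n * C, by positivity, ?_⟩
  intro u hu
  have hrec : Gr (n+2) u = (((n:ℂ) - Complex.I * u)/2) * Gr n u := by
    unfold Gr
    have h1 : (((n+2:ℕ):ℂ) - Complex.I * u)/2 = ((n:ℂ) - Complex.I * u)/2 + 1 := by
      push_cast; ring
    rw [h1, Complex.Gamma_add_one _ (half_ne n u hu), mul_div_assoc]
  have hznorm : ‖((n:ℂ) - Complex.I * u)/2‖ ≤ n * (1 + |u|) := by
    have h1 : ‖((n:ℂ) - Complex.I * u)‖ ≤ n + |u| := by
      calc ‖((n:ℂ) - Complex.I * u)‖ ≤ ‖((n:ℂ))‖ + ‖Complex.I * (u:ℂ)‖ := norm_sub_le _ _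
        _ = n + |u| := by simp
    have h2 : (n : ℝ) + |u| ≤ n * (1 + |u|) + n * (1 + |u|) := by
      have h3 : (1:ℝ) ≤ n := by exact_mod_cast hn
      have := abs_nonneg u
      nlinarith
    calc ‖((n:ℂ) - Complex.I * u)/2‖ = ‖((n:ℂ) - Complex.I * u)‖/2 := by
          rw [norm_div]; norm_num
      _ ≤ (n + |u|)/2 := by linarith
      _ ≤ n * (1 + |u|) := by linarith
  have hpow : (1 + |u|) ^ (((n+2:ℕ):ℝ)/2) = (1 + |u|) ^ ((n:ℝ)/2) * (1 + |u|) := by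
    have h1 : (((n+2:ℕ):ℝ))/2 = (n:ℝ)/2 + 1 := by push_cast; ring
    rw [h1, Real.rpow_add (by positivity), Real.rpow_one]
  rw [hrec, norm_mul, hpow]
  calc ‖((n:ℂ) - Complex.I * u)/2‖ * ‖Gr n u‖
      ≤ (n * (1 + |u|)) * (C * (1 + |u|) ^ ((n:ℝ)/2)) := by
        apply mul_le_mul hznorm (hG u hu) (norm_nonneg _) (by positivity)
    _ = n * C * ((1 + |u|) ^ ((n:ℝ)/2) * (1 + |u|)) := by ring

lemma PG_all (n : ℕ) (hn : 1 ≤ n) : PG n := by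
  have pair : ∀ m : ℕ, PG (m+1) ∧ PG (m+2) := by
    intro m
    induction m with
    | zero => exact ⟨PG1, PG2⟩
    | succ k ih => exact ⟨ih.2, by simpa [Nat.add_assoc] using PG_step (k+1) (by omega) ih.1⟩
  obtain ⟨m, rfl⟩ : ∃ m, n = m + 1 := ⟨n - 1, by omega⟩
  exact (pair m).1

end ImpAux

/-- Let `n ≥ 1`. Then there is a constant `C`, depending only on `n`, such that
for all `u ∈ ℝ \ {0}` and all `x ∈ ℝⁿ \ {0}`,
`|K_{iu}(x)| ≤ C (1 + |u|)^{n/2} |x|^{-n}`. -/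


theorem imaginary_power_kernel_bound (n : ℕ) (hn : 1 ≤ n) :
    ∃ C : ℝ, 0 < C ∧ ∀ u : ℝ, u ≠ 0 → ∀ x : Rn n, x ≠ 0 →
      ‖impKernel n u x‖ ≤ C * (1 + |u|) ^ ((n : ℝ)/2) * ‖x‖ ^ (-(n : ℝ)) := by
  obtain ⟨C, hC, hG⟩ := ImpAux.PG_all n hn
  refine ⟨C, hC, ?_⟩
  intro u hu x hx
  have hxpos : (0:ℝ) < ‖x‖ := norm_pos_iff.2 hx
  have hA : ‖(Real.pi : ℂ) ^ (-(n : ℂ)/2)‖ ≤ 1 := by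
    rw [Complex.norm_cpow_eq_rpow_re_of_pos Real.pi_pos]
    apply Real.rpow_le_one_of_one_le_of_nonpos
    · linarith [Real.pi_gt_three]
    · have h : (-(n : ℂ)/2).re = -(n:ℝ)/2 := by simp
      rw [h]
      have : (0:ℝ) ≤ (n:ℝ) := Nat.cast_nonneg n
      linarith
  have hB : ‖(2:ℂ) ^ (-(Complex.I * u))‖ = 1 := by
    rw [show ((2:ℂ)) = ((2:ℝ):ℂ) by norm_num,
      Complex.norm_cpow_eq_rpow_re_of_pos two_pos]
    simp
  have hD : ‖((‖x‖ : ℝ) : ℂ) ^ (-(n : ℂ) + Complex.I * u)‖ = ‖x‖ ^ (-(n:ℝ)) := by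
    rw [Complex.norm_cpow_eq_rpow_re_of_pos hxpos]
    congr 1
    simp
  have hgr := hG u hu
  calc ‖impKernel n u x‖
      = ‖(Real.pi : ℂ) ^ (-(n : ℂ)/2)‖ * ‖(2:ℂ) ^ (-(Complex.I * u))‖ * ‖ImpAux.Gr n u‖ *
        ‖((‖x‖ : ℝ) : ℂ) ^ (-(n : ℂ) + Complex.I * u)‖ := by
        rw [show impKernel n u x = ((Real.pi:ℂ) ^ (-(n:ℂ)/2)) * ((2:ℂ) ^ (-(Complex.I * u))) *
          (ImpAux.Gr n u) * (((‖x‖:ℝ):ℂ) ^ (-(n:ℂ) + Complex.I * u)) from rfl,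
          norm_mul, norm_mul, norm_mul]
    _ ≤ 1 * 1 * (C * (1+|u|)^((n:ℝ)/2)) * (‖x‖ ^ (-(n:ℝ))) := by
        rw [hB, hD]
        gcongr
    _ = C * (1 + |u|) ^ ((n : ℝ)/2) * ‖x‖ ^ (-(n : ℝ)) := by ring
end
end

section
/- Let n ≥ 2, 1 − n/2 < α < 1, and fix α and n. Then, with A_α(u) = Γ(α + n/2 − 1/2) Γ(−iu/2)/(4π^{1/2}) · [2^{−iu}/Γ(α + n/2 + iu/2) − 1/Γ(α + n/2)], there is a constant C such that |A_α(u)| ≤ C (1 + |u|)^{−α − n/2} for all u ∈ ℝ \ {0}. -/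
open MeasureTheory Metric Filter Topology
open scoped ENNReal NNReal FourierTransform SchwartzMap

noncomputable section

/-- The Mellin coefficient
`A_α(u) = Γ(α+n/2-1/2) Γ(-iu/2)/(4π^{1/2}) · [2^{-iu}/Γ(α+n/2+iu/2) - 1/Γ(α+n/2)]`. -/
def mellinCoef (n : ℕ) (α : ℝ) (u : ℝ) : ℂ :=
  Complex.Gamma ((α + (n : ℝ)/2 - 1/2 : ℝ) : ℂ) * Complex.Gamma (-(Complex.I * u)/2) /
      (4 * (Real.pi : ℂ) ^ (1/2 : ℂ)) *
    ((2 : ℂ) ^ (-(Complex.I * u)) / Complex.Gamma (((α + (n : ℝ)/2 : ℝ) : ℂ) + Complex.I * u/2) -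
      1 / Complex.Gamma (((α + (n : ℝ)/2 : ℝ) : ℂ)))

open Complex Filter Finset Topology

lemma rpow_sq_comm {p θ : ℝ} (hp : 0 < p) : ((p^2) ^ θ) = (p ^ θ)^2 := by
  rw [← Real.rpow_natCast p 2, ← Real.rpow_mul hp.le, ← Real.rpow_natCast (p^θ) 2,
    ← Real.rpow_mul hp.le]
  norm_num [mul_comm]

-- two-term Hölder
lemma holder2 {a b θ : ℝ} (ha : 0 ≤ a) (hb : 0 ≤ b) (hθ0 : 0 ≤ θ) (hθ1 : θ ≤ 1) :
    1 + a^(1-θ) * b^θ ≤ (1+a)^(1-θ) * (1+b)^θ := by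
  have h1θ : (0:ℝ) ≤ 1 - θ := by linarith
  have hw : (1-θ) + θ = 1 := by ring
  have hA : (0:ℝ) < 1 + a := by linarith
  have hB : (0:ℝ) < 1 + b := by linarith
  have h1 : (1/(1+a))^(1-θ) * (1/(1+b))^θ ≤ (1-θ)*(1/(1+a)) + θ*(1/(1+b)) :=
    Real.geom_mean_le_arith_mean2_weighted h1θ hθ0 (by positivity) (by positivity) hw
  have h2 : (a/(1+a))^(1-θ) * (b/(1+b))^θ ≤ (1-θ)*(a/(1+a)) + θ*(b/(1+b)) :=
    Real.geom_mean_le_arith_mean2_weighted h1θ hθ0 (by positivity) (by positivity) hw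
  have hsum : (1-θ)*(1/(1+a)) + θ*(1/(1+b)) + ((1-θ)*(a/(1+a)) + θ*(b/(1+b))) = 1 := by
    field_simp
    ring
  have e1 : (1/(1+a))^(1-θ) * (1/(1+b))^θ = 1 / ((1+a)^(1-θ) * (1+b)^θ) := by
    rw [Real.div_rpow zero_le_one hA.le, Real.div_rpow zero_le_one hB.le,
      Real.one_rpow, Real.one_rpow]
    field_simp
  have e2 : (a/(1+a))^(1-θ) * (b/(1+b))^θ = (a^(1-θ)*b^θ) / ((1+a)^(1-θ) * (1+b)^θ) := by
    rw [Real.div_rpow ha hA.le, Real.div_rpow hb hB.le]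
    field_simp
  have hP : (0:ℝ) < (1+a)^(1-θ) * (1+b)^θ := by positivity
  have := add_le_add h1 h2
  rw [e1, e2, ← add_div, div_le_iff₀ hP, hsum, one_mul] at this
  linarith

-- pointwise interpolation inequality
lemma ptwise {t p θ : ℝ} (hp : 0 < p) (hθ0 : 0 ≤ θ) (hθ1 : θ ≤ 1) :
    1 + t^2/(p+θ)^2 ≤ (1+t^2/p^2)^(1-θ) * (1+t^2/(p+1)^2)^θ := by
  have hq : (0:ℝ) < p + 1 := by linarith
  have hx : (0:ℝ) < p + θ := by linarith
  have hw : (1-θ) + θ = 1 := by ring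
  have h1θ : (0:ℝ) ≤ 1 - θ := by linarith
  rcases eq_or_ne t 0 with rfl | ht
  · simp
  have h0 : (0:ℝ) < t^2 := by positivity
  have amgm : p^(1-θ) * (p+1)^θ ≤ p + θ := by
    have := Real.geom_mean_le_arith_mean2_weighted h1θ hθ0 hp.le hq.le hw
    calc p^(1-θ) * (p+1)^θ ≤ (1-θ)*p + θ*(p+1) := this
      _ = p + θ := by ring
  have hg : (0:ℝ) < p^(1-θ) * (p+1)^θ := by positivity
  have step1 : t^2/(p+θ)^2 ≤ (t^2/p^2)^(1-θ) * (t^2/(p+1)^2)^θ := by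
    have e : (t^2/p^2)^(1-θ) * (t^2/(p+1)^2)^θ = t^2 / (p^(1-θ)*(p+1)^θ)^2 := by
      rw [Real.div_rpow (sq_nonneg t) (sq_nonneg p), Real.div_rpow (sq_nonneg t) (sq_nonneg _),
        div_mul_div_comm, ← Real.rpow_add h0, hw, Real.rpow_one, mul_pow,
        rpow_sq_comm hp, rpow_sq_comm hq]
    rw [e]
    exact div_le_div_of_nonneg_left (sq_nonneg t) (by positivity)
      (by nlinarith [pow_le_pow_left₀ hg.le amgm 2])
  calc 1 + t^2/(p+θ)^2 ≤ 1 + (t^2/p^2)^(1-θ) * (t^2/(p+1)^2)^θ := by linarith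
    _ ≤ (1+t^2/p^2)^(1-θ) * (1+t^2/(p+1)^2)^θ :=
        holder2 (by positivity) (by positivity) hθ0 hθ1

lemma normGamma_half (t : ℝ) :
    ‖Complex.Gamma (1/2 + t*I)‖^2 * Real.cosh (Real.pi*t) = Real.pi := by
  have key := Complex.Gamma_mul_Gamma_one_sub (1/2 + t*I)
  have hconj : (starRingEnd ℂ) (1/2 + t*I) = 1 - (1/2 + t*I) := by
    simp [Complex.ext_iff]; norm_num
  have h1 : Complex.Gamma (1 - (1/2 + t*I)) = (starRingEnd ℂ) (Complex.Gamma (1/2 + t*I)) := by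
    rw [← hconj, Complex.Gamma_conj]
  have hsin : Complex.sin (↑Real.pi * (1/2 + t*I)) = (Real.cosh (Real.pi*t) : ℂ) := by
    have : (↑Real.pi : ℂ) * (1/2 + t*I) = ↑Real.pi/2 + (↑Real.pi * t) * I := by ring
    rw [this, Complex.sin_add, Complex.sin_pi_div_two, Complex.cos_pi_div_two]
    push_cast
    rw [Complex.cos_mul_I]
    push_cast [Complex.ofReal_cosh]
    ring
  rw [h1, Complex.mul_conj, hsin] at key
  have hc : (Real.cosh (Real.pi*t) : ℂ) ≠ 0 := by
    exact_mod_cast (Real.cosh_pos (x := Real.pi*t)).ne'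
  rw [eq_div_iff hc] at key
  have : Complex.normSq (Complex.Gamma (1/2 + t*I)) * Real.cosh (Real.pi*t) = Real.pi := by
    exact_mod_cast key
  rw [Complex.sq_norm]
  exact this

lemma normGamma_I {t : ℝ} (ht : t ≠ 0) :
    ‖Complex.Gamma (t*I)‖^2 * (t * Real.sinh (Real.pi*t)) = Real.pi := by
  have key := Complex.Gamma_mul_Gamma_one_sub (t*I)
  have hne : (↑t*I : ℂ) ≠ 0 := by
    simp [Complex.ext_iff, ht]
  have h1 : Complex.Gamma (1 - ↑t*I) = (-(↑t*I)) * (starRingEnd ℂ) (Complex.Gamma (↑t*I)) := by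
    have e : (1 : ℂ) - ↑t*I = (-(↑t*I)) + 1 := by ring
    rw [e, Complex.Gamma_add_one _ (by simpa using hne)]
    congr 1
    rw [← Complex.Gamma_conj]
    congr 1
    simp [Complex.ext_iff]
  have hsin : Complex.sin (↑Real.pi * (↑t*I)) = (Real.sinh (Real.pi*t) : ℂ) * I := by
    have e : (↑Real.pi : ℂ) * (↑t*I) = ((Real.pi * t : ℝ) : ℂ) * I := by push_cast; ring
    rw [e, Complex.sin_mul_I]
    norm_cast
  have hsinh : (Real.sinh (Real.pi*t) : ℂ) * I ≠ 0 := by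
    apply mul_ne_zero _ Complex.I_ne_zero
    rw [Complex.ofReal_ne_zero, ne_eq, Real.sinh_eq_zero]
    exact mul_ne_zero Real.pi_ne_zero ht
  rw [h1, hsin, eq_div_iff hsinh] at key
  -- key : Γ * (-(tI) * conj Γ) * (sinh * I) = π
  have e2 : Complex.Gamma (↑t*I) * (-(↑t*I) * (starRingEnd ℂ) (Complex.Gamma (↑t*I))) *
      ((Real.sinh (Real.pi*t) : ℂ) * I)
      = (Complex.normSq (Complex.Gamma (↑t*I)) : ℂ) * (↑t * (Real.sinh (Real.pi*t):ℂ)) := by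
    rw [show Complex.Gamma (↑t*I) * (-(↑t*I) * (starRingEnd ℂ) (Complex.Gamma (↑t*I))) *
      ((Real.sinh (Real.pi*t) : ℂ) * I)
      = Complex.Gamma (↑t*I) * (starRingEnd ℂ) (Complex.Gamma (↑t*I)) *
        (↑t * (Real.sinh (Real.pi*t):ℂ)) * (-(I*I)) from by ring]
    rw [Complex.mul_conj, Complex.I_mul_I]
    ring
  rw [e2] at key
  have : Complex.normSq (Complex.Gamma (↑t*I)) * (t * Real.sinh (Real.pi*t)) = Real.pi := by
    exact_mod_cast key
  rw [Complex.sq_norm]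
  exact this

lemma gammaSeq_normsq (x t : ℝ) (hx : 0 < x) (n : ℕ) (hn : 1 ≤ n) :
    ‖Complex.GammaSeq ((x:ℂ)+t*I) n‖^2 * ∏ j ∈ Finset.range (n+1), ((x+j)^2+t^2)
      = ((n:ℝ)^x * (n.factorial:ℝ))^2 := by
  have hn0 : (0:ℝ) < n := by exact_mod_cast hn
  have hprod : ∀ j ∈ Finset.range (n+1), ‖((x:ℂ)+t*I) + (j:ℂ)‖^2 = (x+j)^2+t^2 := by
    intro j _
    rw [Complex.sq_norm]
    simp [Complex.normSq_apply]
    ring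
  have hb : ‖(n:ℂ)^((x:ℂ)+t*I)‖ = (n:ℝ)^x := by
    rw [show ((n:ℂ)) = (((n:ℝ)):ℂ) by norm_num,
      norm_cpow_eq_rpow_re_of_pos hn0]
    simp
  rw [Complex.GammaSeq, norm_div, norm_mul, div_pow, mul_pow, norm_prod, ← Finset.prod_pow,
    Finset.prod_congr rfl hprod, hb]
  have hf : ‖((n.factorial : ℕ):ℂ)‖ = (n.factorial:ℝ) := by
    rw [Complex.norm_natCast]
  have hne : ∏ j ∈ Finset.range (n+1), ((x+j)^2+t^2) ≠ 0 := by
    refine (Finset.prod_pos ?_).ne'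
    intro j _; positivity
  rw [hf, div_mul_cancel₀ _ hne, mul_pow]

lemma gammaSeq_pos (x t : ℝ) (hx : 0 < x) (n : ℕ) (hn : 1 ≤ n) :
    0 < ‖Complex.GammaSeq ((x:ℂ)+t*I) n‖^2 := by
  have h := gammaSeq_normsq x t hx n hn
  have hn0 : (0:ℝ) < n := by exact_mod_cast hn
  have h2 : (0:ℝ) < ((n:ℝ)^x * (n.factorial:ℝ))^2 := by
    have : (0:ℝ) < (n.factorial:ℝ) := by exact_mod_cast n.factorial_pos
    positivity
  nlinarith [Finset.prod_pos (fun j (_ : j ∈ Finset.range (n+1)) =>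
    (by positivity : (0:ℝ) < (x+j)^2+t^2)), sq_nonneg ‖Complex.GammaSeq ((x:ℂ)+t*I) n‖]

-- identity : N x n * Q x n = R x n
lemma NQ_eq_R (x t : ℝ) (hx : 0 < x) (n : ℕ) (hn : 1 ≤ n) :
    ‖Complex.GammaSeq ((x:ℂ)+t*I) n‖^2 * (∏ j ∈ Finset.range (n+1), (1+t^2/(x+j)^2))
      = ‖Complex.GammaSeq ((x:ℂ)+(0:ℝ)*I) n‖^2 := by
  have h1 := gammaSeq_normsq x t hx n hn
  have h2 := gammaSeq_normsq x 0 hx n hn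
  have hppos : ∀ j ∈ Finset.range (n+1), (0:ℝ) < (x+j)^2 := by
    intro j _; positivity
  have hQ : (∏ j ∈ Finset.range (n+1), (1+t^2/(x+j)^2)) * ∏ j ∈ Finset.range (n+1), ((x+j)^2+(0:ℝ)^2)
      = ∏ j ∈ Finset.range (n+1), ((x+j)^2+t^2) := by
    rw [← Finset.prod_mul_distrib]
    refine Finset.prod_congr rfl fun j hj => ?_
    have := hppos j hj
    field_simp
    ring
  have hP0 : (0:ℝ) < ∏ j ∈ Finset.range (n+1), ((x+j)^2+(0:ℝ)^2) :=
    Finset.prod_pos (fun j hj => by simpa using hppos j hj)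
  have : ‖Complex.GammaSeq ((x:ℂ)+t*I) n‖^2 * (∏ j ∈ Finset.range (n+1), (1+t^2/(x+j)^2))
      * ∏ j ∈ Finset.range (n+1), ((x+j)^2+(0:ℝ)^2)
      = ‖Complex.GammaSeq ((x:ℂ)+(0:ℝ)*I) n‖^2 * ∏ j ∈ Finset.range (n+1), ((x+j)^2+(0:ℝ)^2) := by
    rw [mul_assoc, hQ, h1, h2]
  exact mul_right_cancel₀ hP0.ne' this

-- Q comparison
lemma Q_compare (t θ : ℝ) (hθ0 : 0 ≤ θ) (hθ1 : θ ≤ 1) (n : ℕ) :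
    (∏ j ∈ Finset.range (n+1), (1+t^2/(1/2+θ+j)^2))
      ≤ (∏ j ∈ Finset.range (n+1), (1+t^2/(1/2+(j:ℝ))^2))^(1-θ)
        * (∏ j ∈ Finset.range (n+1), (1+t^2/(3/2+(j:ℝ))^2))^θ := by
  have key : ∀ j ∈ Finset.range (n+1),
      1+t^2/(1/2+θ+j)^2 ≤ (1+t^2/(1/2+(j:ℝ))^2)^(1-θ) * (1+t^2/(3/2+(j:ℝ))^2)^θ := by
    intro j _
    have hp : (0:ℝ) < 1/2 + (j:ℝ) := by positivity
    have h := ptwise (t := t) (p := 1/2 + (j:ℝ)) hp hθ0 hθ1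
    calc 1+t^2/(1/2+θ+j)^2 = 1 + t^2/((1/2+(j:ℝ))+θ)^2 := by ring_nf
      _ ≤ (1+t^2/(1/2+(j:ℝ))^2)^(1-θ) * (1+t^2/((1/2+(j:ℝ))+1)^2)^θ := h
      _ = (1+t^2/(1/2+(j:ℝ))^2)^(1-θ) * (1+t^2/(3/2+(j:ℝ))^2)^θ := by ring_nf
  calc (∏ j ∈ Finset.range (n+1), (1+t^2/(1/2+θ+j)^2))
      ≤ ∏ j ∈ Finset.range (n+1), ((1+t^2/(1/2+(j:ℝ))^2)^(1-θ) * (1+t^2/(3/2+(j:ℝ))^2)^θ) := by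
        refine Finset.prod_le_prod (fun j _ => by positivity) key
    _ = (∏ j ∈ Finset.range (n+1), (1+t^2/(1/2+(j:ℝ))^2))^(1-θ)
        * (∏ j ∈ Finset.range (n+1), (1+t^2/(3/2+(j:ℝ))^2))^θ := by
        rw [Finset.prod_mul_distrib, ← Real.finset_prod_rpow _ _ (fun j _ => by positivity),
          ← Real.finset_prod_rpow _ _ (fun j _ => by positivity)]

lemma norm_gamma_real_sq (x : ℝ) (hx : 0 < x) :
    ‖Complex.Gamma ((x:ℂ)+(0:ℝ)*I)‖^2 = Real.Gamma x ^ 2 := by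
  have : ((x:ℂ)+(0:ℝ)*I) = (x:ℂ) := by simp
  rw [this, Complex.Gamma_ofReal, Complex.norm_real, Real.norm_eq_abs,
    abs_of_pos (Real.Gamma_pos_of_pos hx)]

lemma gamma_cpx_ne (x t : ℝ) (hx : 0 < x) : Complex.Gamma ((x:ℂ)+t*I) ≠ 0 := by
  apply Complex.Gamma_ne_zero
  intro m h
  have : ((x:ℂ)+t*I).re = (-(m:ℂ)).re := by rw [h]
  simp at this
  linarith [this, (by positivity : (0:ℝ) < x + m)]

lemma tendsto_N (x t : ℝ) :
    Tendsto (fun n => ‖Complex.GammaSeq ((x:ℂ)+t*I) n‖^2) atTop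
      (𝓝 (‖Complex.Gamma ((x:ℂ)+t*I)‖^2)) :=
  ((Complex.GammaSeq_tendsto_Gamma _).norm).pow 2

lemma tendsto_Q (x t : ℝ) (hx : 0 < x) :
    Tendsto (fun n => ∏ j ∈ Finset.range (n+1), (1+t^2/(x+j)^2)) atTop
      (𝓝 (Real.Gamma x ^ 2 / ‖Complex.Gamma ((x:ℂ)+t*I)‖^2)) := by
  have hne : ‖Complex.Gamma ((x:ℂ)+t*I)‖^2 ≠ 0 := by
    exact pow_ne_zero 2 (norm_ne_zero_iff.mpr (gamma_cpx_ne x t hx))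
  have h1 : Tendsto (fun n => ‖Complex.GammaSeq ((x:ℂ)+(0:ℝ)*I) n‖^2
      / ‖Complex.GammaSeq ((x:ℂ)+t*I) n‖^2) atTop
      (𝓝 (Real.Gamma x ^ 2 / ‖Complex.Gamma ((x:ℂ)+t*I)‖^2)) := by
    rw [← norm_gamma_real_sq x hx]
    exact (tendsto_N x 0).div (tendsto_N x t) hne
  apply h1.congr'
  filter_upwards [eventually_ge_atTop 1] with n hn
  rw [← NQ_eq_R x t hx n hn, mul_comm, mul_div_assoc,
    div_self (gammaSeq_pos x t hx n hn).ne', mul_one]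

lemma gamma_interp_lower (t θ : ℝ) (hθ0 : 0 ≤ θ) (hθ1 : θ ≤ 1) :
    Real.Gamma (1/2+θ) ^ 2 * (1+4*t^2) ^ θ / Real.cosh (Real.pi*t)
      ≤ ‖Complex.Gamma (((1/2+θ:ℝ):ℂ) + t*I)‖^2 := by
  set σ₀ : ℝ := 1/2+θ with hσ₀
  have hσpos : 0 < σ₀ := by rw [hσ₀]; linarith
  have hcosh : 0 < Real.cosh (Real.pi*t) := Real.cosh_pos _
  -- limit inequality
  have main : Real.Gamma σ₀ ^ 2 ≤ ‖Complex.Gamma ((σ₀:ℂ)+t*I)‖^2 *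
      ((Real.Gamma (1/2) ^ 2 / ‖Complex.Gamma (((1/2:ℝ):ℂ)+t*I)‖^2)^(1-θ)
        * (Real.Gamma (3/2) ^ 2 / ‖Complex.Gamma (((3/2:ℝ):ℂ)+t*I)‖^2)^θ) := by
    have hf : Tendsto (fun n => ‖Complex.GammaSeq ((σ₀:ℂ)+(0:ℝ)*I) n‖^2) atTop
        (𝓝 (Real.Gamma σ₀^2)) := by
      rw [← norm_gamma_real_sq σ₀ hσpos]; exact tendsto_N σ₀ 0
    have hg : Tendsto (fun n => ‖Complex.GammaSeq ((σ₀:ℂ)+t*I) n‖^2 *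
        ((∏ j ∈ Finset.range (n+1), (1+t^2/((1/2:ℝ)+(j:ℕ))^2))^(1-θ)
          * (∏ j ∈ Finset.range (n+1), (1+t^2/((3/2:ℝ)+(j:ℕ))^2))^θ)) atTop
        (𝓝 (‖Complex.Gamma ((σ₀:ℂ)+t*I)‖^2 *
          ((Real.Gamma (1/2) ^ 2 / ‖Complex.Gamma (((1/2:ℝ):ℂ)+t*I)‖^2)^(1-θ)
            * (Real.Gamma (3/2) ^ 2 / ‖Complex.Gamma (((3/2:ℝ):ℂ)+t*I)‖^2)^θ))) :=
      (tendsto_N σ₀ t).mul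
        (((tendsto_Q (1/2) t (by norm_num)).rpow_const (Or.inr (by linarith))).mul
          ((tendsto_Q (3/2) t (by norm_num)).rpow_const (Or.inr hθ0)))
    refine le_of_tendsto_of_tendsto hf hg ?_
    filter_upwards [eventually_ge_atTop 1] with n hn
    have hQc := Q_compare t θ hθ0 hθ1 n
    have hid := NQ_eq_R σ₀ t hσpos n hn
    rw [← hid]
    have hterm : (∏ j ∈ Finset.range (n+1), (1+t^2/(σ₀+(j:ℕ))^2))
        = ∏ j ∈ Finset.range (n+1), (1+t^2/(1/2+θ+(j:ℕ))^2) := by rw [hσ₀]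
    rw [hterm]
    exact mul_le_mul_of_nonneg_left hQc (sq_nonneg _)
  -- exact values
  have e1 : Real.Gamma (1/2) ^ 2 = Real.pi := by
    rw [Real.Gamma_one_half_eq]; exact Real.sq_sqrt Real.pi_pos.le
  have e2 : ‖Complex.Gamma (((1/2:ℝ):ℂ)+t*I)‖^2 = Real.pi / Real.cosh (Real.pi*t) := by
    have h := normGamma_half t
    have : (((1/2:ℝ):ℂ)) = (1/2 : ℂ) := by norm_num
    rw [this, eq_div_iff hcosh.ne']
    exact h
  have hne2 : (1/2 + (t:ℂ)*I) ≠ 0 := by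
    intro h
    have := congrArg Complex.re h
    simp at this
  have e3 : ‖Complex.Gamma (((3/2:ℝ):ℂ)+t*I)‖^2
      = (1/4+t^2) * (Real.pi / Real.cosh (Real.pi*t)) := by
    have harg : (((3/2:ℝ):ℂ)+t*I) = (1/2 + (t:ℂ)*I) + 1 := by push_cast; ring
    rw [harg, Complex.Gamma_add_one _ hne2, norm_mul, mul_pow]
    have habs : ‖(1/2 + (t:ℂ)*I)‖^2 = 1/4+t^2 := by
      rw [Complex.sq_norm]
      simp [Complex.normSq_apply]
      ring
    rw [habs, ← e2]
    congr 1
    norm_num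
  have e4 : Real.Gamma (3/2) ^ 2 = Real.pi/4 := by
    have : (3/2 : ℝ) = 1/2 + 1 := by norm_num
    rw [this, Real.Gamma_add_one (by norm_num), Real.Gamma_one_half_eq]
    rw [mul_pow, Real.sq_sqrt Real.pi_pos.le]
    norm_num
    ring
  have hq1 : Real.Gamma (1/2) ^ 2 / ‖Complex.Gamma (((1/2:ℝ):ℂ)+t*I)‖^2
      = Real.cosh (Real.pi*t) := by
    rw [e1, e2]
    field_simp
  have hq2 : Real.Gamma (3/2) ^ 2 / ‖Complex.Gamma (((3/2:ℝ):ℂ)+t*I)‖^2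
      = Real.cosh (Real.pi*t) / (1+4*t^2) := by
    rw [e4, e3]
    have h14 : (0:ℝ) < 1/4+t^2 := by positivity
    field_simp
  rw [hq1, hq2] at main
  have h4t : (0:ℝ) < 1+4*t^2 := by positivity
  have hrw : Real.cosh (Real.pi*t)^(1-θ) * (Real.cosh (Real.pi*t)/(1+4*t^2))^θ
      = Real.cosh (Real.pi*t) / (1+4*t^2)^θ := by
    rw [Real.div_rpow hcosh.le h4t.le, ← mul_div_assoc, ← Real.rpow_add hcosh]
    norm_num
  rw [hrw] at main
  have hpθ : (0:ℝ) < (1+4*t^2)^θ := Real.rpow_pos_of_pos h4t θ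
  rw [div_le_iff₀ hcosh]
  calc Real.Gamma σ₀ ^2 * (1+4*t^2)^θ
      ≤ (‖Complex.Gamma ((σ₀:ℂ)+t*I)‖^2 * (Real.cosh (Real.pi*t)/(1+4*t^2)^θ)) * (1+4*t^2)^θ := by
        exact mul_le_mul_of_nonneg_right main hpθ.le
    _ = ‖Complex.Gamma ((σ₀:ℂ)+t*I)‖^2 * Real.cosh (Real.pi*t) := by
        field_simp

lemma gamma_shift (x t : ℝ) (hx : 0 < x) (m : ℕ) :
    |t|^m * ‖Complex.Gamma ((x:ℂ)+t*I)‖ ≤ ‖Complex.Gamma ((x:ℂ)+m+t*I)‖ := by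
  induction m with
  | zero => simp
  | succ k ih =>
    have harg : ((x:ℂ)+(k+1:ℕ)+t*I) = ((x:ℂ)+k+t*I) + 1 := by push_cast; ring
    have hne : ((x:ℂ)+(k:ℕ)+t*I) ≠ 0 := by
      intro h
      have := congrArg Complex.re h
      simp at this
      linarith [this, (by positivity : (0:ℝ) < x + k)]
    rw [harg, Complex.Gamma_add_one _ hne, norm_mul]
    have habs : |t| ≤ ‖(x:ℂ)+(k:ℕ)+t*I‖ := by
      have h := Complex.abs_im_le_norm ((x:ℂ)+(k:ℕ)+t*I)
      simpa using h
    calc |t|^(k+1) * ‖Complex.Gamma ((x:ℂ)+t*I)‖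
        = |t| * (|t|^k * ‖Complex.Gamma ((x:ℂ)+t*I)‖) := by ring
      _ ≤ |t| * ‖Complex.Gamma ((x:ℂ)+(k:ℕ)+t*I)‖ :=
          mul_le_mul_of_nonneg_left ih (abs_nonneg t)
      _ ≤ ‖(x:ℂ)+(k:ℕ)+t*I‖ * ‖Complex.Gamma ((x:ℂ)+(k:ℕ)+t*I)‖ :=
          mul_le_mul_of_nonneg_right habs (norm_nonneg _)

lemma cosh_le_exp_abs (x : ℝ) : Real.cosh x ≤ Real.exp |x| := by
  rw [Real.cosh_eq]
  rcases le_or_gt 0 x with h | h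
  · rw [_root_.abs_of_nonneg h]
    have : Real.exp (-x) ≤ Real.exp x := Real.exp_le_exp.mpr (by linarith)
    linarith
  · rw [_root_.abs_of_neg h]
    have : Real.exp x ≤ Real.exp (-x) := Real.exp_le_exp.mpr (by linarith)
    linarith

lemma sinh_ge (x : ℝ) (hx : 1 ≤ x) : Real.exp x / 4 ≤ Real.sinh x := by
  rw [Real.sinh_eq]
  have h1 : Real.exp (-x) ≤ 1 := Real.exp_le_one_iff.mpr (by linarith)
  have h2 : (2:ℝ) ≤ Real.exp x := by
    calc (2:ℝ) ≤ Real.exp 1 := by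
          have := Real.add_one_le_exp 1; linarith
      _ ≤ Real.exp x := Real.exp_le_exp.mpr hx
  linarith

lemma normGammaI_le {t : ℝ} (ht : 1/2 ≤ |t|) :
    ‖Complex.Gamma ((t:ℂ)*I)‖^2 ≤ 4*Real.pi*Real.exp (-(Real.pi*|t|)) / |t| := by
  have ht0 : t ≠ 0 := by intro h; rw [h] at ht; norm_num at ht
  have htpos : 0 < |t| := abs_pos.mpr ht0
  have hid := normGamma_I ht0
  have hsym : t * Real.sinh (Real.pi*t) = |t| * Real.sinh (Real.pi*|t|) := by
    rcases le_or_gt 0 t with h|h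
    · rw [_root_.abs_of_nonneg h]
    · rw [_root_.abs_of_neg h, show Real.pi * -t = -(Real.pi*t) by ring, Real.sinh_neg]; ring
  rw [hsym] at hid
  have hπ2 : (2:ℝ) ≤ Real.pi := Real.two_le_pi
  have hπt : 1 ≤ Real.pi*|t| := by nlinarith
  have hs := sinh_ge _ hπt
  set X := ‖Complex.Gamma ((t:ℂ)*I)‖^2 with hX
  have hX0 : 0 ≤ X := by positivity
  have hexp : 0 < Real.exp (Real.pi*|t|) := Real.exp_pos _
  have h1 : X * (|t| * Real.exp (Real.pi*|t|)) ≤ 4*Real.pi := by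
    nlinarith [mul_le_mul_of_nonneg_left hs (abs_nonneg t),
      mul_le_mul_of_nonneg_left (mul_le_mul_of_nonneg_left hs (abs_nonneg t)) hX0]
  have hee : Real.exp (Real.pi*|t|) * Real.exp (-(Real.pi*|t|)) = 1 := by
    rw [← Real.exp_add]; simp
  rw [le_div_iff₀ htpos]
  nlinarith [mul_le_mul_of_nonneg_right h1 (Real.exp_pos (-(Real.pi*|t|))).le]

lemma key_ratio (σ : ℝ) (hσ : 1 < σ) : ∃ c : ℝ, 0 < c ∧ ∀ t : ℝ, 1/2 ≤ |t| →
    ‖Complex.Gamma ((t:ℂ)*I)‖ ≤ c * |t|^(-σ) * ‖Complex.Gamma ((σ:ℂ) + t*I)‖ := by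
  set m : ℕ := ⌊σ - 1/2⌋₊ with hm
  have hm1 : (m:ℝ) ≤ σ - 1/2 := Nat.floor_le (by linarith)
  have hm2 : σ - 1/2 < m + 1 := Nat.lt_floor_add_one _
  set θ : ℝ := σ - m - 1/2 with hθ
  have hθ0 : 0 ≤ θ := by simp [hθ]; linarith
  have hθ1 : θ ≤ 1 := by simp [hθ]; linarith
  have hσ0 : σ - (m:ℝ) = 1/2 + θ := by rw [hθ]; ring
  have hΓ0 : 0 < Real.Gamma (1/2+θ) := Real.Gamma_pos_of_pos (by linarith)
  refine ⟨Real.sqrt (4*Real.pi) / Real.Gamma (1/2+θ), by positivity, ?_⟩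
  intro t ht
  have ht0 : t ≠ 0 := by intro h; rw [h] at ht; norm_num at ht
  have htpos : 0 < |t| := abs_pos.mpr ht0
  have hcosh : 0 < Real.cosh (Real.pi*t) := Real.cosh_pos _
  -- lower bound on ‖Γ(σ+ti)‖²
  have hBsq : Real.Gamma (1/2+θ)^2 * (|t|^(2*σ-1) * Real.exp (-(Real.pi*|t|)))
      ≤ ‖Complex.Gamma ((σ:ℂ) + t*I)‖^2 := by
    have harg : ((σ:ℂ) + t*I) = (((1/2+θ:ℝ)):ℂ) + m + t*I := by
      push_cast
      rw [show ((σ:ℝ):ℂ) = (((σ - m : ℝ)):ℂ) + (m:ℂ) by push_cast; ring]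
      push_cast [hσ0]
      ring
    have hshift := gamma_shift (1/2+θ) t (by linarith) m
    have hinterp := gamma_interp_lower t θ hθ0 hθ1
    have hsq : (|t|^m * ‖Complex.Gamma (((1/2+θ:ℝ):ℂ)+t*I)‖)^2
        ≤ ‖Complex.Gamma ((σ:ℂ) + t*I)‖^2 := by
      rw [harg]
      exact pow_le_pow_left₀ (by positivity) hshift 2
    have hcosh_le : Real.cosh (Real.pi*t) ≤ Real.exp (Real.pi*|t|) := by
      have := cosh_le_exp_abs (Real.pi*t)
      rwa [abs_mul, _root_.abs_of_nonneg Real.pi_pos.le] at this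
    have hpow : |t|^(2*θ) ≤ (1+4*t^2)^θ := by
      have h1 : |t|^(2*θ) = (t^2)^θ := by
        rw [Real.rpow_mul (abs_nonneg t), show ((2:ℝ)) = ((2:ℕ):ℝ) by norm_num,
          Real.rpow_natCast, _root_.sq_abs]
      rw [h1]
      exact Real.rpow_le_rpow (sq_nonneg t) (by nlinarith) hθ0
    have hc2 : Real.exp (-(Real.pi*|t|)) ≤ 1 / Real.cosh (Real.pi*t) := by
      rw [Real.exp_neg, one_div]
      exact inv_anti₀ hcosh hcosh_le
    have hTalg : |t|^(2*σ-1) = (|t|^m)^2 * |t|^(2*θ) := by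
      rw [← pow_mul, ← Real.rpow_natCast |t| (m*2), ← Real.rpow_add htpos]
      congr 1
      push_cast
      rw [hθ]
      ring
    have hE0 : 0 ≤ Real.exp (-(Real.pi*|t|)) := (Real.exp_pos _).le
    calc Real.Gamma (1/2+θ)^2 * (|t|^(2*σ-1) * Real.exp (-(Real.pi*|t|)))
        = (|t|^m)^2 * (Real.Gamma (1/2+θ)^2 * (|t|^(2*θ) * Real.exp (-(Real.pi*|t|)))) := by
          rw [hTalg]; ring
      _ ≤ (|t|^m)^2 * (Real.Gamma (1/2+θ)^2 * ((1+4*t^2)^θ * (1/Real.cosh (Real.pi*t)))) := by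
          refine mul_le_mul_of_nonneg_left (mul_le_mul_of_nonneg_left ?_ (by positivity))
            (by positivity)
          exact mul_le_mul hpow hc2 hE0 (by positivity)
      _ = (|t|^m)^2 * (Real.Gamma (1/2+θ)^2 * (1+4*t^2)^θ / Real.cosh (Real.pi*t)) := by
          ring
      _ ≤ (|t|^m)^2 * ‖Complex.Gamma (((1/2+θ:ℝ):ℂ)+t*I)‖^2 :=
          mul_le_mul_of_nonneg_left hinterp (by positivity)
      _ = (|t|^m * ‖Complex.Gamma (((1/2+θ:ℝ):ℂ)+t*I)‖)^2 := by ring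
      _ ≤ ‖Complex.Gamma ((σ:ℂ) + t*I)‖^2 := hsq
  -- now conclude via squares
  have hA := normGammaI_le ht
  have hc2' : (Real.sqrt (4*Real.pi) / Real.Gamma (1/2+θ))^2 = 4*Real.pi / Real.Gamma (1/2+θ)^2 := by
    rw [div_pow, Real.sq_sqrt (by positivity)]
  have hT1 : |t|^(-σ)*|t|^(-σ) * |t|^(2*σ-1) = 1/|t| := by
    rw [← Real.rpow_add htpos, ← Real.rpow_add htpos,
      show -σ + -σ + (2*σ-1) = -1 by ring, Real.rpow_neg_one, one_div]
  have hsqle : ‖Complex.Gamma ((t:ℂ)*I)‖^2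
      ≤ (Real.sqrt (4*Real.pi) / Real.Gamma (1/2+θ) * |t|^(-σ) * ‖Complex.Gamma ((σ:ℂ) + t*I)‖)^2 := by
    have expand : (Real.sqrt (4*Real.pi) / Real.Gamma (1/2+θ) * |t|^(-σ)
        * ‖Complex.Gamma ((σ:ℂ) + t*I)‖)^2
        = (4*Real.pi / Real.Gamma (1/2+θ)^2) * (|t|^(-σ)*|t|^(-σ))
          * ‖Complex.Gamma ((σ:ℂ) + t*I)‖^2 := by
      rw [← hc2']; ring
    rw [expand]
    calc ‖Complex.Gamma ((t:ℂ)*I)‖^2 ≤ 4*Real.pi*Real.exp (-(Real.pi*|t|)) / |t| := hA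
      _ = (4*Real.pi / Real.Gamma (1/2+θ)^2) * (|t|^(-σ)*|t|^(-σ))
            * (Real.Gamma (1/2+θ)^2 * (|t|^(2*σ-1) * Real.exp (-(Real.pi*|t|)))) := by
          have h1 : (4*Real.pi / Real.Gamma (1/2+θ)^2) * (|t|^(-σ)*|t|^(-σ))
              * (Real.Gamma (1/2+θ)^2 * (|t|^(2*σ-1) * Real.exp (-(Real.pi*|t|))))
              = 4*Real.pi * ((|t|^(-σ)*|t|^(-σ)) * |t|^(2*σ-1)) * Real.exp (-(Real.pi*|t|)) := by
            field_simp
          rw [h1, hT1]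
          ring
      _ ≤ (4*Real.pi / Real.Gamma (1/2+θ)^2) * (|t|^(-σ)*|t|^(-σ))
            * ‖Complex.Gamma ((σ:ℂ) + t*I)‖^2 := by
          refine mul_le_mul_of_nonneg_left hBsq ?_
          positivity
  have h20 : (2:ℕ) ≠ 0 := by norm_num
  exact (pow_le_pow_iff_left₀ (norm_nonneg _) (by positivity) h20).mp hsqle

lemma exp_poly (σ : ℝ) (hσ : 1 < σ) (x : ℝ) (hx : 0 ≤ x) :
    Real.exp (-(Real.pi*x/4)) ≤ (4*σ/Real.pi)^σ * (1+x)^(-σ) := by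
  have hπ : 0 < Real.pi := Real.pi_pos
  have hπ4 : Real.pi ≤ 4 := Real.pi_le_four
  have hbase : (1:ℝ) ≤ 4*σ/Real.pi := by
    rw [le_div_iff₀ hπ]; nlinarith
  have hy : (0:ℝ) ≤ Real.pi*x/(4*σ) := by positivity
  have heq : (4*σ/Real.pi) * (Real.pi*x/(4*σ)) = x := by
    field_simp
  have h1 : 1 + x ≤ (4*σ/Real.pi) * Real.exp (Real.pi*x/(4*σ)) := by
    have h2 := Real.add_one_le_exp (Real.pi*x/(4*σ))
    have h3 := mul_le_mul_of_nonneg_left h2 (by linarith : (0:ℝ) ≤ 4*σ/Real.pi)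
    rw [mul_add, heq, mul_one] at h3
    linarith
  have h4 : (1+x)^σ ≤ (4*σ/Real.pi)^σ * Real.exp (Real.pi*x/4) := by
    calc (1+x)^σ ≤ ((4*σ/Real.pi) * Real.exp (Real.pi*x/(4*σ)))^σ :=
          Real.rpow_le_rpow (by linarith) h1 (by linarith)
      _ = (4*σ/Real.pi)^σ * Real.exp (Real.pi*x/(4*σ))^σ :=
          Real.mul_rpow (by linarith) (Real.exp_pos _).le
      _ = (4*σ/Real.pi)^σ * Real.exp (Real.pi*x/4) := by
        rw [← Real.exp_mul]
        congr 2
        field_simp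
  have hP : (0:ℝ) < (1+x)^σ := Real.rpow_pos_of_pos (by linarith) σ
  have hE : (0:ℝ) < Real.exp (Real.pi*x/4) := Real.exp_pos _
  rw [Real.rpow_neg (by linarith : (0:ℝ) ≤ 1+x), Real.exp_neg, ← div_eq_mul_inv]
  rw [le_div_iff₀ hP]
  nlinarith [mul_le_mul_of_nonneg_right h4 (inv_pos.mpr hE).le, mul_inv_cancel₀ hE.ne']

lemma norm_gamma_neg_t (x t : ℝ) :
    ‖Complex.Gamma ((x:ℂ) + t*I)‖ = ‖Complex.Gamma ((x:ℂ) - t*I)‖ := by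
  have h : ((x:ℂ) - t*I) = (starRingEnd ℂ) ((x:ℂ) + t*I) := by
    simp [Complex.ext_iff]
  rw [h, Complex.Gamma_conj]
  exact (RCLike.norm_conj _).symm

lemma small_u (σ : ℝ) (hσ : 1 < σ) : ∃ M : ℝ, 0 ≤ M ∧ ∀ u : ℝ, |u| ≤ 1 → u ≠ 0 →
    ‖Complex.Gamma (-(Complex.I*u)/2)‖ *
      ‖(2:ℂ)^(-(Complex.I*u)) / Complex.Gamma ((σ:ℂ) + Complex.I*u/2)
        - 1/Complex.Gamma ((σ:ℂ))‖ ≤ M := by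
  set H : ℂ → ℂ := fun z => (2:ℂ)^(-z) * (Complex.Gamma ((σ:ℂ) + z/2))⁻¹ with hHdef
  have hH : Differentiable ℂ H := by
    apply Differentiable.mul
    · exact Differentiable.const_cpow (differentiable_id.neg) (Or.inl two_ne_zero)
    · exact Complex.differentiable_one_div_Gamma.comp
        ((differentiable_const _).add (differentiable_id.div_const _))
  -- continuous bounding functions
  have hg1 : ContinuousOn (fun u : ℝ => Complex.Gamma (1 - (Complex.I*u)/2)) (Set.Icc (-1) 1) := by
    intro u _
    apply ContinuousAt.continuousWithinAt
    apply ContinuousAt.comp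
    · apply (Complex.differentiableAt_Gamma _ ?_).continuousAt
      intro m h
      have := congrArg Complex.re h
      simp at this
      linarith [this, (by positivity : (0:ℝ) ≤ (m:ℝ))]
    · fun_prop
  have hg2 : ContinuousOn (fun u : ℝ => dslope H 0 (Complex.I*u)) (Set.Icc (-1) 1) := by
    intro u _
    apply ContinuousAt.continuousWithinAt
    apply ContinuousAt.comp
    · rcases eq_or_ne ((Complex.I*(u:ℂ))) 0 with h0 | h0
      · rw [h0]
        exact continuousAt_dslope_same.mpr (hH.differentiableAt)
      · exact (continuousAt_dslope_of_ne h0).mpr hH.continuous.continuousAt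
    · fun_prop
  obtain ⟨C1, hC1⟩ := (isCompact_Icc).exists_bound_of_continuousOn hg1
  obtain ⟨C2, hC2⟩ := (isCompact_Icc).exists_bound_of_continuousOn hg2
  have h0mem : (0:ℝ) ∈ Set.Icc (-1:ℝ) 1 := by norm_num
  have hC1' : 0 ≤ C1 := le_trans (norm_nonneg _) (hC1 0 h0mem)
  have hC2' : 0 ≤ C2 := le_trans (norm_nonneg _) (hC2 0 h0mem)
  refine ⟨2*C1*C2, by positivity, ?_⟩
  intro u hu hu0
  have humem : u ∈ Set.Icc (-1:ℝ) 1 := abs_le.mp hu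
  set w : ℂ := -(Complex.I*u)/2 with hw
  have hwnorm : ‖w‖ = |u|/2 := by
    rw [hw]
    simp [norm_div, norm_neg, norm_mul, Complex.norm_I]
  have hupos : 0 < |u| := abs_pos.mpr hu0
  have hw0 : w ≠ 0 := norm_ne_zero_iff.mp (by rw [hwnorm]; positivity)
  have hGw : ‖Complex.Gamma w‖ = ‖Complex.Gamma (1 - (Complex.I*u)/2)‖ / (|u|/2) := by
    have h1 : Complex.Gamma (w+1) = w * Complex.Gamma w := Complex.Gamma_add_one w hw0
    have h2 : (1:ℂ) - (Complex.I*u)/2 = w + 1 := by rw [hw]; ring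
    rw [h2, h1, norm_mul, hwnorm]
    field_simp
  have hIu0 : (Complex.I*(u:ℂ)) ≠ 0 := by
    simp [Complex.ext_iff, hu0]
  have hbr : (2:ℂ)^(-(Complex.I*u)) / Complex.Gamma ((σ:ℂ) + Complex.I*u/2)
      - 1/Complex.Gamma ((σ:ℂ)) = H (Complex.I*u) - H 0 := by
    rw [hHdef]
    simp only [neg_zero, Complex.cpow_zero, zero_div, add_zero]
    rw [one_div, div_eq_mul_inv, one_mul]
  have hds : H (Complex.I*u) - H 0 = (Complex.I*u) * dslope H 0 (Complex.I*u) := by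
    rw [dslope_of_ne H hIu0, slope_def_field]
    field_simp
    ring
  rw [hbr, hds, norm_mul]
  have hnormIu : ‖(Complex.I*(u:ℂ))‖ = |u| := by
    simp [norm_mul, Complex.norm_I]
  rw [hnormIu, hGw]
  have b1 := hC1 u humem
  have b2 := hC2 u humem
  calc ‖Complex.Gamma (1 - (Complex.I*u)/2)‖ / (|u|/2) * (|u| * ‖dslope H 0 (Complex.I*u)‖)
      = 2 * ‖Complex.Gamma (1 - (Complex.I*u)/2)‖ * ‖dslope H 0 (Complex.I*u)‖ := by
        field_simp
    _ ≤ 2 * C1 * C2 := by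
        have := mul_le_mul (mul_le_mul_of_nonneg_left b1 (by norm_num : (0:ℝ) ≤ 2)) b2
          (norm_nonneg _) (by positivity)
        linarith

lemma normGammaI_le' {t : ℝ} (ht : 1/2 ≤ |t|) :
    ‖Complex.Gamma ((t:ℂ)*I)‖ ≤ Real.sqrt (8*Real.pi) * Real.exp (-(Real.pi*|t|)/2) := by
  have h1 := normGammaI_le ht
  have htpos : (0:ℝ) < |t| := by linarith
  have hsq : (Real.sqrt (8*Real.pi) * Real.exp (-(Real.pi*|t|)/2))^2
      = 8*Real.pi * Real.exp (-(Real.pi*|t|)) := by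
    rw [mul_pow, Real.sq_sqrt (by positivity), sq, ← Real.exp_add]
    ring_nf
  have h2 : 4*Real.pi*Real.exp (-(Real.pi*|t|)) / |t| ≤ 8*Real.pi*Real.exp (-(Real.pi*|t|)) := by
    rw [div_le_iff₀ htpos]
    have hE := (Real.exp_pos (-(Real.pi*|t|))).le
    nlinarith [Real.pi_pos]
  refine (pow_le_pow_iff_left₀ (norm_nonneg _) (by positivity) (by norm_num : (2:ℕ) ≠ 0)).mp ?_
  rw [hsq]
  exact le_trans h1 h2

/-- Let `n ≥ 2` and `1 - n/2 < α < 1`. Then there is a constant `C` such that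
`|A_α(u)| ≤ C (1 + |u|)^{-α-n/2}` for all `u ∈ ℝ \ {0}`. -/
theorem mellin_coef_decay
    (n : ℕ) (hn : 2 ≤ n) (α : ℝ) (hα : 1 - (n : ℝ)/2 < α ∧ α < 1) :
    ∃ C : ℝ, 0 < C ∧ ∀ u : ℝ, u ≠ 0 →
      ‖mellinCoef n α u‖ ≤ C * (1 + |u|) ^ (-α - (n : ℝ)/2) := by
  obtain ⟨hα1, hα2⟩ := hα
  set σ : ℝ := α + (n:ℝ)/2 with hσdef
  have hσ : 1 < σ := by rw [hσdef]; linarith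
  have hσ0 : 0 < σ := by linarith
  obtain ⟨c, hc, hkey⟩ := key_ratio σ hσ
  obtain ⟨M, hM, hsmall⟩ := small_u σ hσ
  have hΓσ : 0 < Real.Gamma σ := Real.Gamma_pos_of_pos hσ0
  set K0 : ℝ := ‖Complex.Gamma ((α + (n:ℝ)/2 - 1/2 : ℝ):ℂ)‖ / ‖(4 * (Real.pi:ℂ)^(1/2:ℂ) : ℂ)‖
    with hK0
  have hK0' : 0 ≤ K0 := by positivity
  set Cbig : ℝ := K0 * (c*(4:ℝ)^σ + Real.sqrt (8*Real.pi) * (4*σ/Real.pi)^σ / Real.Gamma σ)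
    with hCbig
  set Csmall : ℝ := K0 * M * (2:ℝ)^σ with hCsmall
  have hCb0 : 0 ≤ Cbig := by
    rw [hCbig]
    have : (0:ℝ) ≤ c*(4:ℝ)^σ + Real.sqrt (8*Real.pi) * (4*σ/Real.pi)^σ / Real.Gamma σ := by
      positivity
    positivity
  have hCs0 : 0 ≤ Csmall := by rw [hCsmall]; positivity
  refine ⟨Cbig + Csmall + 1, by positivity, ?_⟩
  intro u hu
  have hexp : -α - (n:ℝ)/2 = -σ := by rw [hσdef]; ring
  rw [hexp]
  have hPneg : (0:ℝ) < (1+|u|)^(-σ) := Real.rpow_pos_of_pos (by positivity) _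
  -- norm factorization
  have hfact : ‖mellinCoef n α u‖ = K0 * ‖Complex.Gamma (-(Complex.I * u)/2)‖ *
      ‖(2 : ℂ) ^ (-(Complex.I * u)) / Complex.Gamma (((σ:ℝ) : ℂ) + Complex.I * u/2) -
        1 / Complex.Gamma (((σ:ℝ) : ℂ))‖ := by
    rw [mellinCoef, norm_mul, norm_div, norm_mul, hK0]
    ring
  rw [hfact]
  rcases le_total (|u|) 1 with hcase | hcase
  · -- small u
    have hb := hsmall u hcase hu
    have h2σ : (1:ℝ) ≤ (2:ℝ)^σ * (1+|u|)^(-σ) := by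
      have h1 : (1+|u|)^σ ≤ (2:ℝ)^σ :=
        Real.rpow_le_rpow (by positivity) (by linarith) hσ0.le
      have h2 : (1+|u|)^σ * (1+|u|)^(-σ) = 1 := by
        rw [← Real.rpow_add (by positivity)]
        simp
      nlinarith [Real.rpow_pos_of_pos (show (0:ℝ) < 1+|u| by positivity) σ]
    calc K0 * ‖Complex.Gamma (-(Complex.I * u)/2)‖ * ‖_‖
        = K0 * (‖Complex.Gamma (-(Complex.I * u)/2)‖ * ‖_‖) := by ring
      _ ≤ K0 * M := mul_le_mul_of_nonneg_left hb hK0'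
      _ ≤ K0 * M * ((2:ℝ)^σ * (1+|u|)^(-σ)) := le_mul_of_one_le_right (by positivity) h2σ
      _ = Csmall * (1+|u|)^(-σ) := by rw [hCsmall]; ring
      _ ≤ (Cbig + Csmall + 1) * (1+|u|)^(-σ) := by nlinarith
  · -- large u
    set t' : ℝ := -u/2 with ht'def
    have habs : |t'| = |u|/2 := by
      rw [ht'def, show -u/2 = (-u)/2 by ring, abs_div, abs_neg]
      norm_num
    have ht' : 1/2 ≤ |t'| := by rw [habs]; linarith
    have hnum : (-(Complex.I * ↑u)/2 : ℂ) = ((t':ℝ):ℂ)*I := by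
      rw [ht'def]; push_cast; ring
    have hden : ‖Complex.Gamma (((σ:ℝ) : ℂ) + Complex.I * u/2)‖
        = ‖Complex.Gamma (((σ:ℝ) : ℂ) + (t':ℝ)*I)‖ := by
      have e1 : ((σ:ℝ):ℂ) + Complex.I*(u:ℂ)/2 = ((σ:ℝ):ℂ) - ((t':ℝ):ℂ)*I := by
        rw [ht'def]; push_cast; ring
      rw [e1, ← norm_gamma_neg_t σ t']
    set A : ℝ := ‖Complex.Gamma (((t':ℝ):ℂ)*I)‖ with hA
    set B : ℝ := ‖Complex.Gamma (((σ:ℝ) : ℂ) + (t':ℝ)*I)‖ with hB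
    have hB0 : 0 < B := by
      rw [hB]
      exact norm_pos_iff.mpr (gamma_cpx_ne σ t' hσ0)
    have hkey' : A ≤ c * |t'|^(-σ) * B := hkey t' ht'
    have h2norm : ‖(2:ℂ)^(-(Complex.I * (u:ℂ)))‖ = 1 := by
      rw [show ((2:ℂ)) = (((2:ℝ)):ℂ) by norm_num,
        norm_cpow_eq_rpow_re_of_pos two_pos]
      simp
    have hΓre : ‖Complex.Gamma (((σ:ℝ) : ℂ))‖ = Real.Gamma σ := by
      rw [Complex.Gamma_ofReal, Complex.norm_real, Real.norm_eq_abs,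
        _root_.abs_of_pos hΓσ]
    have hbr : ‖(2 : ℂ) ^ (-(Complex.I * u)) / Complex.Gamma (((σ:ℝ) : ℂ) + Complex.I * u/2) -
        1 / Complex.Gamma (((σ:ℝ) : ℂ))‖ ≤ 1/B + 1/Real.Gamma σ := by
      refine le_trans (norm_sub_le _ _) ?_
      rw [norm_div, norm_div, h2norm, norm_one, hΓre, hden]
    -- rpow estimates
    have hTbound : |t'|^(-σ) ≤ (4:ℝ)^σ * (1+|u|)^(-σ) := by
      have h14 : (0:ℝ) < (1+|u|)/4 := by positivity
      have hle : (1+|u|)/4 ≤ |t'| := by rw [habs]; linarith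
      have h1 := Real.rpow_le_rpow_of_nonpos h14 hle (by linarith : -σ ≤ 0)
      have h2 : ((1+|u|)/4)^(-σ) = (4:ℝ)^σ * (1+|u|)^(-σ) := by
        rw [Real.div_rpow (by positivity) (by norm_num : (0:ℝ) ≤ 4),
          Real.rpow_neg (by norm_num : (0:ℝ) ≤ 4), div_eq_mul_inv, inv_inv]
        ring
      rw [← h2]
      exact h1
    have hexp' : A ≤ Real.sqrt (8*Real.pi) * ((4*σ/Real.pi)^σ * (1+|u|)^(-σ)) := by
      refine le_trans (normGammaI_le' ht') ?_
      refine mul_le_mul_of_nonneg_left ?_ (Real.sqrt_nonneg _)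
      have harg : -(Real.pi*|t'|)/2 = -(Real.pi*|u|/4) := by rw [habs]; ring
      rw [harg]
      exact exp_poly σ hσ |u| (abs_nonneg u)
    -- combine
    rw [hnum]
    calc K0 * A * ‖(2 : ℂ) ^ (-(Complex.I * u)) / Complex.Gamma (((σ:ℝ) : ℂ) + Complex.I * u/2) -
          1 / Complex.Gamma (((σ:ℝ) : ℂ))‖
        ≤ K0 * A * (1/B + 1/Real.Gamma σ) := by
          refine mul_le_mul_of_nonneg_left hbr ?_
          rw [hA]
          positivity
      _ = K0 * (A/B + A/Real.Gamma σ) := by ring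
      _ ≤ K0 * (c * ((4:ℝ)^σ * (1+|u|)^(-σ))
            + Real.sqrt (8*Real.pi) * ((4*σ/Real.pi)^σ * (1+|u|)^(-σ)) / Real.Gamma σ) := by
          refine mul_le_mul_of_nonneg_left (add_le_add ?_ ?_) hK0'
          · rw [div_le_iff₀ hB0]
            calc A ≤ c * |t'|^(-σ) * B := hkey'
              _ ≤ c * ((4:ℝ)^σ * (1+|u|)^(-σ)) * B := by
                  refine mul_le_mul_of_nonneg_right
                    (mul_le_mul_of_nonneg_left hTbound hc.le) hB0.le
          · gcongr
      _ = Cbig * (1+|u|)^(-σ) := by rw [hCbig]; ring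
      _ ≤ (Cbig + Csmall + 1) * (1+|u|)^(-σ) := by nlinarith
end
end

section
/- Let n ≥ 2, let 1 − n/2 < α < 1, and let p ∈ P^log(ℝ^n) be a variable exponent with n/(n−1+α) < p⁻ ≤ p⁺ < n/(1−α). Then there exist θ with 0 < θ < 1 − 2/n + 2α/n and a variable exponent p̃ ∈ P^log(ℝ^n) with 0 < inf_x 1/p̃(x) ≤ sup_x 1/p̃(x) < 1, such that 1/p(x) = (1−θ)/2 + θ/p̃(x) for all x ∈ ℝ^n. -/
open MeasureTheory Metric Filter Topology
open scoped ENNReal NNReal FourierTransform SchwartzMap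

noncomputable section

/-- An a.e. upper bound for a log-Hölder continuous function is a pointwise bound. -/
lemma logHolder_ae_le_pointwise {n : ℕ} (t : Rn n → ℝ) (c₁ : ℝ) (hc : 0 < c₁)
    (hmod : ∀ x y : Rn n, dist x y < 1/2 →
      |t x - t y| ≤ c₁ / Real.log (Real.exp 1 + (dist x y)⁻¹))
    (b : ℝ) (hae : ∀ᵐ y : Rn n, t y ≤ b) : ∀ x, t x ≤ b := by
  intro x
  by_contra hgt
  push_neg at hgt
  set ε := t x - b with hε
  have hεpos : 0 < ε := sub_pos.2 hgt
  set δ := min (1/4 : ℝ) (Real.exp (-(c₁/ε))) with hδ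
  have hδpos : 0 < δ := lt_min (by norm_num) (Real.exp_pos _)
  -- find a point in the ball where t ≤ b
  have hball : 0 < volume (ball x δ) := measure_ball_pos volume x hδpos
  have hexists : ∃ y, y ∈ ball x δ ∧ t y ≤ b := by
    by_contra hno
    push_neg at hno
    have hsub : ball x δ ⊆ {y | ¬ t y ≤ b} := fun y hy => not_le.2 (hno y hy)
    have : volume (ball x δ) ≤ volume {y | ¬ t y ≤ b} := measure_mono hsub
    rw [ae_iff] at hae
    simp only [not_le] at hae ⊢
    rw [show {y | ¬ t y ≤ b} = {y | b < t y} by ext y; simp [not_le]] at this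
    exact absurd (le_antisymm (this.trans hae.le) zero_le) hball.ne'
  obtain ⟨y, hy, hty⟩ := hexists
  have hd : dist x y < δ := by rwa [Metric.mem_ball, dist_comm] at hy
  rcases eq_or_lt_of_le (dist_nonneg : (0:ℝ) ≤ dist x y) with h0 | h0
  · have hxy : x = y := by
      have := dist_eq_zero.1 h0.symm
      exact this
    exact absurd (hxy ▸ hty) (not_le.2 hgt)
  · have hd2 : dist x y < 1/2 := hd.trans_le ((min_le_left _ _).trans (by norm_num))
    have hlog : c₁/ε < Real.log (Real.exp 1 + (dist x y)⁻¹) := by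
      have h1 : Real.log (dist x y)⁻¹ ≤ Real.log (Real.exp 1 + (dist x y)⁻¹) :=
        Real.log_le_log (by positivity) (by nlinarith [Real.exp_pos (1:ℝ)])
      have h2 : c₁/ε < Real.log (dist x y)⁻¹ := by
        rw [Real.log_inv]
        have h3 : Real.log (dist x y) < -(c₁/ε) := by
          have := Real.log_lt_log h0 (hd.trans_le (min_le_right _ _))
          rwa [Real.log_exp] at this
        linarith
      linarith
    have hlogpos : 0 < Real.log (Real.exp 1 + (dist x y)⁻¹) :=
      lt_trans (by positivity) hlog
    have hb1 : |t x - t y| ≤ c₁ / Real.log (Real.exp 1 + (dist x y)⁻¹) := hmod x y hd2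
    have hb2 : c₁ / Real.log (Real.exp 1 + (dist x y)⁻¹) < ε := by
      rw [div_lt_iff₀ hlogpos]
      calc c₁ = ε * (c₁/ε) := by field_simp
        _ < ε * Real.log (Real.exp 1 + (dist x y)⁻¹) := by
            exact mul_lt_mul_of_pos_left hlog hεpos
    have : t x - t y ≤ |t x - t y| := le_abs_self _
    linarith

set_option maxHeartbeats 2000000 in
/-- Lemma 3.3. Let `n ≥ 2`, `1 - n/2 < α < 1`, and let `p ∈ P^log(ℝⁿ)` with
`n/(n-1+α) < p⁻ ≤ p⁺ < n/(1-α)`. Then there exist `θ` with `0 < θ < 1 - 2/n + 2α/n` and a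
variable exponent `pt ∈ P^log(ℝⁿ)` with `0 < inf 1/pt ≤ sup 1/pt < 1`, such that
`1/p(x) = (1-θ)/2 + θ/pt(x)` for all `x`. -/
theorem exists_interpolation_exponent
    (n : ℕ) (hn : 2 ≤ n) (α : ℝ) (hα : 1 - (n : ℝ)/2 < α ∧ α < 1)
    (p : Rn n → ℝ≥0∞) (hp : MemPLog p)
    (hlow : ENNReal.ofReal ((n : ℝ)/((n : ℝ) - 1 + α)) < essInf p volume)
    (hhigh : essSup p volume < ENNReal.ofReal ((n : ℝ)/(1 - α))) :
    ∃ (θ : ℝ) (pt : Rn n → ℝ≥0∞),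
      0 < θ ∧ θ < 1 - 2/(n : ℝ) + 2 * α/(n : ℝ) ∧
      MemPLog pt ∧
      0 < ⨅ x : Rn n, (pt x)⁻¹ ∧ (⨆ x : Rn n, (pt x)⁻¹) < 1 ∧
      ∀ x, (p x)⁻¹ = ENNReal.ofReal ((1 - θ)/2) + ENNReal.ofReal θ * (pt x)⁻¹ := by
  obtain ⟨hpm, hp1, ⟨c₁, hc₁, hmod⟩, ⟨pinf, c₂, hc₂, hdec⟩⟩ := hp
  obtain ⟨hα0, hα1⟩ := hα
  have hn2 : (2:ℝ) ≤ (n:ℝ) := by exact_mod_cast hn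
  have hnpos : (0:ℝ) < n := by linarith
  obtain ⟨t, ht⟩ : ∃ t : Rn n → ℝ, ∀ x, t x = ((p x)⁻¹).toReal :=
    ⟨fun x => ((p x)⁻¹).toReal, fun _ => rfl⟩
  have hmod' : ∀ x y : Rn n, dist x y < 1/2 →
      |t x - t y| ≤ c₁ / Real.log (Real.exp 1 + (dist x y)⁻¹) := by
    intro x y h; rw [ht x, ht y]; exact hmod x y h
  have hdec' : ∀ x : Rn n, |t x - pinf| ≤ c₂ / Real.log (Real.exp 1 + ‖x‖) := by
    intro x; rw [ht x]; exact hdec x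
  have hden : (0:ℝ) < (n:ℝ) - 1 + α := by linarith
  have hApos : (0:ℝ) < (n:ℝ)/((n:ℝ) - 1 + α) := div_pos hnpos hden
  have hBpos : (0:ℝ) < (n:ℝ)/(1 - α) := div_pos hnpos (by linarith)
  have hIpos : 0 < essInf p volume := lt_trans (ENNReal.ofReal_pos.2 hApos) hlow
  have hμ : (volume : Measure (Rn n)) ≠ 0 := by
    intro h
    have h2 := measure_ball_pos volume (0 : Rn n) one_pos
    rw [h] at h2
    simp at h2
  haveI : (ae (volume : Measure (Rn n))).NeBot := ae_neBot.2 hμ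
  have haeI : ∀ᵐ x : Rn n, essInf p volume ≤ p x := ae_essInf_le (f := p)
  have haeS : ∀ᵐ x : Rn n, p x ≤ essSup p volume := ENNReal.ae_le_essSup p
  have hSpos : 0 < essSup p volume := by
    obtain ⟨x0, h1, h2⟩ := (haeI.and haeS).exists
    exact hIpos.trans_le (h1.trans h2)
  have hIinv_ne_top : (essInf p volume)⁻¹ ≠ ⊤ := by simp [hIpos.ne']
  have hSinv_ne_top : (essSup p volume)⁻¹ ≠ ⊤ := by simp [hSpos.ne']
  obtain ⟨b, hbdef⟩ : ∃ b : ℝ, b = ((essInf p volume)⁻¹).toReal := ⟨_, rfl⟩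
  obtain ⟨a, hadef⟩ : ∃ a : ℝ, a = ((essSup p volume)⁻¹).toReal := ⟨_, rfl⟩
  -- b < (n-1+α)/n
  have hb : b < ((n:ℝ) - 1 + α)/n := by
    have h1 : (essInf p volume)⁻¹ < (ENNReal.ofReal ((n:ℝ)/((n:ℝ) - 1 + α)))⁻¹ :=
      ENNReal.inv_lt_inv.2 hlow
    have h2 : (ENNReal.ofReal ((n:ℝ)/((n:ℝ) - 1 + α)))⁻¹ =
        ENNReal.ofReal (((n:ℝ) - 1 + α)/n) := by
      rw [← ENNReal.ofReal_inv_of_pos hApos]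
      congr 1
      rw [inv_div]
    rw [h2] at h1
    calc b < (ENNReal.ofReal (((n:ℝ) - 1 + α)/n)).toReal := by
          rw [hbdef]
          exact (ENNReal.toReal_lt_toReal hIinv_ne_top ENNReal.ofReal_ne_top).2 h1
      _ = ((n:ℝ) - 1 + α)/n := ENNReal.toReal_ofReal (le_of_lt (div_pos hden hnpos))
  -- (1-α)/n < a
  have ha : (1 - α)/n < a := by
    have h1 : (ENNReal.ofReal ((n:ℝ)/(1 - α)))⁻¹ < (essSup p volume)⁻¹ :=
      ENNReal.inv_lt_inv.2 hhigh
    have h2 : (ENNReal.ofReal ((n:ℝ)/(1 - α)))⁻¹ = ENNReal.ofReal ((1 - α)/n) := by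
      rw [← ENNReal.ofReal_inv_of_pos hBpos]
      congr 1
      rw [inv_div]
    rw [h2] at h1
    calc (1 - α)/n = (ENNReal.ofReal ((1 - α)/n)).toReal :=
          (ENNReal.toReal_ofReal (div_nonneg (by linarith) hnpos.le)).symm
      _ < a := by
          rw [hadef]
          exact (ENNReal.toReal_lt_toReal ENNReal.ofReal_ne_top hSinv_ne_top).2 h1
  have hapos : 0 < a := lt_trans (div_pos (by linarith) hnpos) ha
  -- a.e. bounds on t
  have hub_ae : ∀ᵐ x : Rn n, t x ≤ b := by
    filter_upwards [haeI] with x hx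
    rw [ht x, hbdef]
    exact ENNReal.toReal_mono hIinv_ne_top (ENNReal.inv_le_inv.2 hx)
  have hlb_ae : ∀ᵐ x : Rn n, a ≤ t x := by
    filter_upwards [haeS] with x hx
    have hne : (p x)⁻¹ ≠ ⊤ := by
      simp only [ne_eq, ENNReal.inv_eq_top]
      exact (lt_of_lt_of_le one_pos (hp1 x)).ne'
    rw [ht x, hadef]
    exact ENNReal.toReal_mono hne (ENNReal.inv_le_inv.2 hx)
  -- upgrade to pointwise bounds
  have hub : ∀ x, t x ≤ b := logHolder_ae_le_pointwise t c₁ hc₁ hmod' b hub_ae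
  have hlb : ∀ x, a ≤ t x := by
    have hmain := logHolder_ae_le_pointwise (fun x => -(t x)) c₁ hc₁
      (fun x y h => by
        show |(-(t x)) - (-(t y))| ≤ _
        have heq : (-(t x)) - (-(t y)) = t y - t x := by ring
        rw [heq, dist_comm x y]
        exact hmod' y x (by rwa [dist_comm]))
      (-a) (by filter_upwards [hlb_ae] with x hx; simpa using neg_le_neg hx)
    intro x
    have h2 : -(t x) ≤ -a := hmain x
    linarith
  -- choice of θ
  have hΘpos : (0:ℝ) < 1 - 2/(n:ℝ) + 2 * α/(n:ℝ) := by
    have h1 : 2/(n:ℝ) - 2 * α/(n:ℝ) = (2 - 2*α)/n := by ring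
    have h2 : (2 - 2*α)/n < 1 := by
      rw [div_lt_one hnpos]
      linarith
    linarith
  have hΘlt1 : 1 - 2/(n:ℝ) + 2 * α/(n:ℝ) < 1 := by
    have h1 : 2 * α/(n:ℝ) < 2/(n:ℝ) := (div_lt_div_iff_of_pos_right hnpos).2 (by linarith)
    linarith
  have hb' : 2*b - 1 < 1 - 2/(n:ℝ) + 2 * α/(n:ℝ) := by
    have h1 : 2 * (((n:ℝ) - 1 + α)/n) = 2 - 2/(n:ℝ) + 2 * α/(n:ℝ) := by
      field_simp
    nlinarith [hb]
  have ha' : 1 - 2*a < 1 - 2/(n:ℝ) + 2 * α/(n:ℝ) := by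
    have h1 : 2 * ((1 - α)/n) = 2/(n:ℝ) - 2 * α/(n:ℝ) := by
      field_simp
    nlinarith [ha]
  obtain ⟨θ, hθdef⟩ : ∃ θ : ℝ,
      θ = (max (max (2*b - 1) (1 - 2*a)) ((1 - 2/(n:ℝ) + 2 * α/(n:ℝ))/2)
        + (1 - 2/(n:ℝ) + 2 * α/(n:ℝ)))/2 := ⟨_, rfl⟩
  have hL1 : 2*b - 1 ≤ max (max (2*b - 1) (1 - 2*a)) ((1 - 2/(n:ℝ) + 2 * α/(n:ℝ))/2) :=
    (le_max_left _ _).trans (le_max_left _ _)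
  have hL2 : 1 - 2*a ≤ max (max (2*b - 1) (1 - 2*a)) ((1 - 2/(n:ℝ) + 2 * α/(n:ℝ))/2) :=
    (le_max_right _ _).trans (le_max_left _ _)
  have hL3 : (1 - 2/(n:ℝ) + 2 * α/(n:ℝ))/2 ≤
      max (max (2*b - 1) (1 - 2*a)) ((1 - 2/(n:ℝ) + 2 * α/(n:ℝ))/2) := le_max_right _ _
  have hLΘ : max (max (2*b - 1) (1 - 2*a)) ((1 - 2/(n:ℝ) + 2 * α/(n:ℝ))/2)
      < 1 - 2/(n:ℝ) + 2 * α/(n:ℝ) := max_lt (max_lt hb' ha') (by linarith)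
  have hθΘ : θ < 1 - 2/(n:ℝ) + 2 * α/(n:ℝ) := by linarith [hLΘ]
  have hθpos : 0 < θ := by linarith [hL3, hΘpos]
  have hθ1 : θ < 1 := hθΘ.trans hΘlt1
  have hθb : 2*b - 1 < θ := by linarith [hL1, hLΘ]
  have hθa : 1 - 2*a < θ := by linarith [hL2, hLΘ]
  -- the new exponent
  obtain ⟨q, hq⟩ : ∃ q : Rn n → ℝ, ∀ x, q x = (t x - (1 - θ)/2)/θ :=
    ⟨fun x => (t x - (1 - θ)/2)/θ, fun _ => rfl⟩
  have hεq : 0 < (a - (1 - θ)/2)/θ := div_pos (by linarith) hθpos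
  have hqlb : ∀ x, (a - (1 - θ)/2)/θ ≤ q x := fun x => by
    rw [hq x]
    exact (div_le_div_iff_of_pos_right hθpos).2 (by linarith [hlb x])
  have hqpos : ∀ x, 0 < q x := fun x => lt_of_lt_of_le hεq (hqlb x)
  have hqub : ∀ x, q x ≤ (b - (1 - θ)/2)/θ := fun x => by
    rw [hq x]
    exact (div_le_div_iff_of_pos_right hθpos).2 (by linarith [hub x])
  have hM1 : (b - (1 - θ)/2)/θ < 1 := by rw [div_lt_one hθpos]; linarith
  obtain ⟨pt, hpt⟩ : ∃ pt : Rn n → ℝ≥0∞, ∀ x, pt x = (ENNReal.ofReal (q x))⁻¹ :=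
    ⟨fun x => (ENNReal.ofReal (q x))⁻¹, fun _ => rfl⟩
  have hptinv : ∀ x, (pt x)⁻¹ = ENNReal.ofReal (q x) := fun x => by
    rw [hpt x, inv_inv]
  have hpttoReal : ∀ x, ((pt x)⁻¹).toReal = q x := fun x => by
    rw [hptinv x, ENNReal.toReal_ofReal (hqpos x).le]
  refine ⟨θ, pt, hθpos, hθΘ, ?_, ?_, ?_, ?_⟩
  · -- MemPLog pt
    refine ⟨?_, ?_, ⟨c₁/θ, by positivity, ?_⟩,
      ⟨(pinf - (1 - θ)/2)/θ, c₂/θ, by positivity, ?_⟩⟩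
    · -- measurable
      have hqmeas : Measurable q := by
        have : q = fun x => (((p x)⁻¹).toReal - (1 - θ)/2)/θ := by
          funext x
          rw [hq x, ht x]
        rw [this]
        exact ((hpm.inv.ennreal_toReal).sub measurable_const).div_const θ
      have : pt = fun x => (ENNReal.ofReal (q x))⁻¹ := funext hpt
      rw [this]
      exact hqmeas.ennreal_ofReal.inv
    · -- 1 ≤ pt x
      intro x
      rw [hpt x, ENNReal.one_le_inv]
      exact ENNReal.ofReal_le_one.2 (le_of_lt (lt_of_le_of_lt (hqub x) hM1))
    · -- local log-Hölder
      intro x y hxy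
      have hL1 : (1:ℝ) ≤ Real.log (Real.exp 1 + (dist x y)⁻¹) := by
        calc (1:ℝ) = Real.log (Real.exp 1) := (Real.log_exp 1).symm
          _ ≤ _ := Real.log_le_log (Real.exp_pos 1)
              (le_add_of_nonneg_right (inv_nonneg.2 dist_nonneg))
      have hLpos : (0:ℝ) < Real.log (Real.exp 1 + (dist x y)⁻¹) := by linarith
      rw [hpttoReal x, hpttoReal y]
      have heq : q x - q y = (t x - t y)/θ := by rw [hq x, hq y]; ring
      rw [heq, abs_div, abs_of_pos hθpos]
      have h1 : |t x - t y| ≤ c₁ / Real.log (Real.exp 1 + (dist x y)⁻¹) := hmod' x y hxy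
      calc |t x - t y|/θ ≤ (c₁ / Real.log (Real.exp 1 + (dist x y)⁻¹))/θ :=
            (div_le_div_iff_of_pos_right hθpos).2 h1
        _ = c₁/θ / Real.log (Real.exp 1 + (dist x y)⁻¹) := by
            rw [div_div, div_div, mul_comm]
    · -- decay
      intro x
      have hL1 : (1:ℝ) ≤ Real.log (Real.exp 1 + ‖x‖) := by
        calc (1:ℝ) = Real.log (Real.exp 1) := (Real.log_exp 1).symm
          _ ≤ _ := Real.log_le_log (Real.exp_pos 1)
              (le_add_of_nonneg_right (norm_nonneg x))
      have hLpos : (0:ℝ) < Real.log (Real.exp 1 + ‖x‖) := by linarith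
      rw [hpttoReal x]
      have heq : q x - (pinf - (1 - θ)/2)/θ = (t x - pinf)/θ := by
        rw [hq x]; ring
      rw [heq, abs_div, abs_of_pos hθpos]
      have h1 : |t x - pinf| ≤ c₂ / Real.log (Real.exp 1 + ‖x‖) := hdec' x
      calc |t x - pinf|/θ ≤ (c₂ / Real.log (Real.exp 1 + ‖x‖))/θ :=
            (div_le_div_iff_of_pos_right hθpos).2 h1
        _ = c₂/θ / Real.log (Real.exp 1 + ‖x‖) := by
            rw [div_div, div_div, mul_comm]
  · -- 0 < inf
    refine lt_of_lt_of_le (ENNReal.ofReal_pos.2 hεq) (le_iInf fun x => ?_)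
    rw [hptinv x]
    exact ENNReal.ofReal_le_ofReal (hqlb x)
  · -- sup < 1
    refine lt_of_le_of_lt (iSup_le fun x => ?_) (ENNReal.ofReal_lt_one.2 hM1)
    rw [hptinv x]
    exact ENNReal.ofReal_le_ofReal (hqub x)
  · -- the identity
    intro x
    rw [hptinv x, ← ENNReal.ofReal_mul (by linarith : (0:ℝ) ≤ θ),
      ← ENNReal.ofReal_add (by linarith) (mul_nonneg hθpos.le (hqpos x).le)]
    have heq : (1 - θ)/2 + θ * q x = t x := by
      rw [hq x]
      field_simp
      ring
    rw [heq, ht x]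
    have hne : (p x)⁻¹ ≠ ⊤ := by
      simp only [ne_eq, ENNReal.inv_eq_top]
      exact (lt_of_lt_of_le one_pos (hp1 x)).ne'
    exact (ENNReal.ofReal_toReal hne).symm
end
end
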